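/- arXiv:1802.00325 — 6 statements merged into one kernel-verified Lean document; each statement's English description precedes it below -/
import Mathlib

section
/- Let k ≥ 2 be an integer, let x : ℕ → A be a k-automatic sequence over a finite alphabet A (i.e., its k-kernel is finite), and let a : ℕ → ℤ be the Sturmian sequence defined by a(n) = ⌊(n+1)α + β⌋ − ⌊nα + β⌋ for an irrational α with 0 < α < 1 and a real β with 0 ≤ β < 1 (so a takes values in {0,1} ⊆ A). Then there exists a constant C (depending on x and a) such that whenever x and a have a factor in common of length n — i.e., there exist indices i, j with x(i+t) = a(j+t) for all t < n — one has n ≤ C. -/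
lemma sum_range_mul_comp (f : ℕ → ℤ) (A B : ℕ) :
    ∑ t ∈ Finset.range (A * B), f t
      = ∑ c ∈ Finset.range A, ∑ s ∈ Finset.range B, f (c * B + s) := by
  induction A with
  | zero => simp
  | succ A ih =>
      rw [Nat.succ_mul, Finset.sum_range_add, ih, Finset.sum_range_succ]

lemma sturmian_sum (α β : ℝ) (a : ℕ → ℤ)
    (ha : ∀ n : ℕ, a n = ⌊((n : ℝ) + 1) * α + β⌋ - ⌊(n : ℝ) * α + β⌋)
    (j L : ℕ) :
    ∑ t ∈ Finset.range L, a (j + t)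
      = ⌊((j : ℝ) + (L : ℝ)) * α + β⌋ - ⌊(j : ℝ) * α + β⌋ := by
  induction L with
  | zero => simp
  | succ L ih =>
      rw [Finset.sum_range_succ, ih, ha (j + L)]
      push_cast
      ring_nf

lemma floor_diff_fract (c B : ℝ) : ⌊c + B⌋ - ⌊B⌋ = ⌊c + Int.fract B⌋ := by
  have h : c + B = (c + Int.fract B) + (⌊B⌋ : ℤ) := by
    rw [Int.fract]; push_cast; ring
  rw [h, Int.floor_add_intCast]; ring

set_option maxHeartbeats 1000000 in
/-- **Main theorem (general Sturmian version).**
Let `k ≥ 2`, let `x : ℕ → ℤ` be a sequence over a finite alphabet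
(`Set.range x` is finite) whose `k`-kernel is finite (i.e. `x` is `k`-automatic),
and let `a` be the Sturmian sequence `a n = ⌊(n+1)α + β⌋ - ⌊nα + β⌋` with `α`
irrational, `0 < α < 1`, `0 ≤ β < 1` (its values lie in `{0,1} ⊆ ℤ`).
Then there is a constant `C` such that any common factor of `x` and `a`
has length at most `C`. -/
theorem automatic_sturmian_common_factor_bounded
    (k : ℕ) (hk : 2 ≤ k)
    (x : ℕ → ℤ) (hfin : (Set.range x).Finite)
    (hkernel : {g : ℕ → ℤ | ∃ r s : ℕ, s < k ^ r ∧
        g = fun n => x (n * k ^ r + s)}.Finite)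
    (α β : ℝ) (hα : Irrational α) (hα0 : 0 < α) (hα1 : α < 1)
    (hβ0 : 0 ≤ β) (hβ1 : β < 1)
    (a : ℕ → ℤ)
    (ha : ∀ n : ℕ, a n = ⌊((n : ℝ) + 1) * α + β⌋ - ⌊(n : ℝ) * α + β⌋) :
    ∃ C : ℕ, ∀ (n i j : ℕ), (∀ t < n, x (i + t) = a (j + t)) → n ≤ C := by
  by_contra hC
  push_neg at hC
  set Ker : Set (ℕ → ℤ) := {g : ℕ → ℤ | ∃ r s : ℕ, s < k ^ r ∧
      g = fun n => x (n * k ^ r + s)} with hKerdef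
  have hKer : Ker.Finite := hkernel
  haveI : Finite ↥Ker := hKer.to_subtype
  have memKer : ∀ r s : ℕ, s < k ^ r → (fun n => x (n * k ^ r + s)) ∈ Ker :=
    fun r s h => ⟨r, s, h, rfl⟩
  set F : ℕ → (↥Ker → ℤ) := fun m g => g.1 m with hFdef
  have hFr : (Set.range F).Finite := by
    apply Set.Finite.subset (Set.Finite.pi (fun _ : ↥Ker => hfin))
    rintro f ⟨m, rfl⟩
    intro g _
    obtain ⟨r, s, hs, hg⟩ := g.2
    exact ⟨m * k ^ r + s, by show x _ = g.1 m; rw [hg]⟩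
  -- determinism under multiplying position by k^e
  have Det0 : ∀ m₁ m₂, F m₁ = F m₂ → ∀ e, F (m₁ * k ^ e) = F (m₂ * k ^ e) := by
    intro m₁ m₂ h e
    funext g
    obtain ⟨r, s, hs, hg⟩ := g.2
    have hcl : (fun n => x (n * k ^ (e + r) + s)) ∈ Ker :=
      memKer (e + r) s (lt_of_lt_of_le hs
        (Nat.pow_le_pow_right (by omega) (Nat.le_add_left r e)))
    have key : ∀ m', F (m' * k ^ e) g = F m' ⟨_, hcl⟩ := by
      intro m'
      show g.1 (m' * k ^ e) = x (m' * k ^ (e + r) + s)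
      rw [hg]
      simp only
      congr 1
      rw [pow_add]; ring
    rw [key m₁, key m₂, h]
  -- block counts
  set Nc : ℕ → ℕ → ℤ := fun r m => ∑ t ∈ Finset.range (k ^ r), x (m * k ^ r + t) with hNcdef
  have NDet : ∀ m₁ m₂, F m₁ = F m₂ → ∀ r, Nc r m₁ = Nc r m₂ := by
    intro m₁ m₂ h r
    apply Finset.sum_congr rfl
    intro t ht
    exact congrFun h ⟨fun n => x (n * k ^ r + t), memKer r t (Finset.mem_range.mp ht)⟩
  have NRec : ∀ q r m, Nc (r + q) m = ∑ c ∈ Finset.range (k ^ q), Nc r (m * k ^ q + c) := by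
    intro q r m
    show (∑ t ∈ Finset.range (k ^ (r + q)), x (m * k ^ (r + q) + t)) = _
    have h1 : k ^ (r + q) = k ^ q * k ^ r := by rw [pow_add]; ring
    rw [h1, sum_range_mul_comp]
    apply Finset.sum_congr rfl
    intro c _
    apply Finset.sum_congr rfl
    intro s _
    congr 1
    ring
  -- Step A : aligned matches at every scale
  have StepA : ∀ R : ℕ, ∃ m j, ∀ s, s < k ^ R → x (m * k ^ R + s) = a (j + s) := by
    intro R
    obtain ⟨n, i, j₀, hmatch, hn⟩ := hC (2 * k ^ R)
    have hkR : 0 < k ^ R := pow_pos (by omega) R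
    have h1 : i / k ^ R * k ^ R ≤ i := Nat.div_mul_le_self i (k ^ R)
    have h2 : i < (i / k ^ R + 1) * k ^ R := by
      have hdm := Nat.div_add_mod i (k ^ R)
      have hmod : i % k ^ R < k ^ R := Nat.mod_lt _ hkR
      have he : (i / k ^ R + 1) * k ^ R = k ^ R * (i / k ^ R) + k ^ R := by ring
      omega
    have h3 : (i / k ^ R + 1) * k ^ R ≤ i + k ^ R := by
      have he : (i / k ^ R + 1) * k ^ R = i / k ^ R * k ^ R + k ^ R := by ring
      omega
    refine ⟨i / k ^ R + 1, j₀ + ((i / k ^ R + 1) * k ^ R - i), ?_⟩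
    intro s hs
    have harg : (i / k ^ R + 1) * k ^ R + s = i + (((i / k ^ R + 1) * k ^ R - i) + s) := by
      omega
    rw [harg, hmatch _ (by omega)]
    congr 1
    omega
  -- number of states
  set Dc : ℕ := hFr.toFinset.card with hDcdef
  haveI : Finite ↥(Set.range F) := hFr.to_subtype
  haveI : Nonempty ↥(Set.range F) := ⟨⟨F 0, ⟨0, rfl⟩⟩⟩
  -- per-scale data
  set Data : ℕ → (↥(Set.range F) × Fin (Dc + 1) × Fin (Dc + 1)) → Prop := fun R b =>
    1 ≤ (b.2.2 : ℕ) ∧ ∃ m j,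
      (∀ s, s < k ^ R → x (m * k ^ R + s) = a (j + s)) ∧
      (∀ t : ℕ, (b.2.1 : ℕ) + t * (b.2.2 : ℕ) + Dc ≤ R →
          F (m * k ^ (R - ((b.2.1 : ℕ) + t * (b.2.2 : ℕ)))) = b.1.val) with hDatadef
  have PerR : ∀ R, Dc ≤ R → ∃ b, Data R b := by
    intro R hR
    obtain ⟨m, j, hmj⟩ := StepA R
    have hcard : hFr.toFinset.card < (Finset.Icc (R - Dc) R).card := by
      rw [Nat.card_Icc]; omega
    obtain ⟨r₁, hr₁, r₂, hr₂, hne, heq⟩ :=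
      Finset.exists_ne_map_eq_of_card_lt_of_maps_to hcard
        (f := fun r => F (m * k ^ (R - r))) (fun r _ => hFr.mem_toFinset.mpr ⟨_, rfl⟩)
    have main : ∀ r₁ r₂, r₁ ∈ Finset.Icc (R - Dc) R → r₂ ∈ Finset.Icc (R - Dc) R → r₁ < r₂ →
        F (m * k ^ (R - r₁)) = F (m * k ^ (R - r₂)) → ∃ b, Data R b := by
      clear hr₁ hr₂ hne heq r₁ r₂
      intro r₁ r₂ h1 h2 hlt heq
      simp only [Finset.mem_Icc] at h1 h2
      have hp'pos : 1 ≤ r₂ - r₁ := by omega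
      have hp'le : r₂ - r₁ ≤ Dc := by omega
      have hc'lt : r₁ % (r₂ - r₁) < r₂ - r₁ := Nat.mod_lt _ (by omega)
      set p' := r₂ - r₁ with hp'
      set c' := r₁ % p' with hc'
      have step : ∀ s, s ≤ r₁ → F (m * k ^ (R - s)) = F (m * k ^ (R - (s + p'))) := by
        intro s hs
        have e1 : R - s = (R - r₁) + (r₁ - s) := by omega
        have e2 : R - (s + p') = (R - r₂) + (r₁ - s) := by omega
        rw [e1, e2, pow_add, pow_add, ← mul_assoc, ← mul_assoc]
        exact Det0 _ _ heq (r₁ - s)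
      have chain : ∀ t, c' + t * p' ≤ r₁ →
          F (m * k ^ (R - (c' + t * p'))) = F (m * k ^ (R - c')) := by
        intro t
        induction t with
        | zero => intro _; norm_num
        | succ t ih =>
            intro hle
            have hmul : c' + (t + 1) * p' = (c' + t * p') + p' := by ring
            rw [hmul] at hle ⊢
            rw [← step (c' + t * p') (by omega)]
            exact ih (by omega)
      refine ⟨⟨⟨F (m * k ^ (R - c')), ⟨_, rfl⟩⟩, ⟨c', by omega⟩, ⟨p', by omega⟩⟩, ?_, m, j, hmj, ?_⟩
      · simpa using hp'pos
      · intro t ht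
        simp only at ht ⊢
        exact chain t (by omega)
    rcases hne.lt_or_gt with h | h
    · exact main r₁ r₂ hr₁ hr₂ h heq
    · exact main r₂ r₁ hr₂ hr₁ h heq.symm
  -- global pigeonhole over scales R
  obtain ⟨Ψ, hΨ⟩ : ∃ Ψ : ℕ → (↥(Set.range F) × Fin (Dc + 1) × Fin (Dc + 1)),
      ∀ R, Dc ≤ R → Data R (Ψ R) := by
    refine ⟨fun R => if h : Dc ≤ R then (PerR R h).choose else Classical.arbitrary _, ?_⟩
    intro R h
    simp only [dif_pos h]
    exact (PerR R h).choose_spec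
  obtain ⟨b, hb⟩ := Finite.exists_infinite_fiber Ψ
  have hbinf : (Ψ ⁻¹' {b}).Infinite := Set.infinite_coe_iff.mp hb
  set r0 : ℕ := (b.2.1 : ℕ) with hr0def
  set p : ℕ := (b.2.2 : ℕ) with hpdef
  have H : ∀ N, ∃ R, N ≤ R ∧ Dc ≤ R ∧ Data R b := by
    intro N
    obtain ⟨R, hRmem, hRgt⟩ := hbinf.exists_gt (N + Dc)
    have hb' : Ψ R = b := hRmem
    exact ⟨R, by omega, by omega, hb' ▸ hΨ R (by omega)⟩
  have hp1 : 1 ≤ p := by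
    obtain ⟨R, -, -, hd⟩ := H 0
    exact hd.1
  obtain ⟨m_v, hm_v⟩ := b.1.2
  set u : ℕ → ℤ := fun t => Nc (r0 + t * p) m_v with hudef
  -- Fact 1 : per-horizon common intercept
  have Fact1 : ∀ i : ℕ, ∃ θ : ℝ, 0 ≤ θ ∧ θ < 1 ∧
      ∀ t, t ≤ i → u t = ⌊(k : ℝ) ^ (r0 + t * p) * α + θ⌋ := by
    intro i
    obtain ⟨R, hNR, hDcR, hdat⟩ := H (r0 + i * p + Dc)
    obtain ⟨hp1', m, j, hmj, hstate⟩ := hdat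
    refine ⟨Int.fract ((j : ℝ) * α + β), Int.fract_nonneg _, Int.fract_lt_one _, ?_⟩
    intro t hti
    have htle : r0 + t * p + Dc ≤ R := by
      have : t * p ≤ i * p := Nat.mul_le_mul_right _ hti
      omega
    have hrR : r0 + t * p ≤ R := by omega
    have hstate' := hstate t (by rw [← hr0def, ← hpdef]; omega)
    rw [← hr0def, ← hpdef] at hstate'
    have e1 : u t = Nc (r0 + t * p) (m * k ^ (R - (r0 + t * p))) :=
      NDet _ _ (by rw [hm_v, ← hstate']) _
    have e2 : Nc (r0 + t * p) (m * k ^ (R - (r0 + t * p)))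
        = ∑ s ∈ Finset.range (k ^ (r0 + t * p)), a (j + s) := by
      apply Finset.sum_congr rfl
      intro s hs
      have hsr : s < k ^ (r0 + t * p) := Finset.mem_range.mp hs
      have harg : m * k ^ (R - (r0 + t * p)) * k ^ (r0 + t * p) + s = m * k ^ R + s := by
        have hRe : R - (r0 + t * p) + (r0 + t * p) = R := by omega
        rw [mul_assoc, ← pow_add, hRe]
      rw [harg]
      exact hmj s (lt_of_lt_of_le hsr (Nat.pow_le_pow_right (by omega) hrR))
    rw [e1, e2, sturmian_sum α β a ha j (k ^ (r0 + t * p))]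
    have e3 : ((j : ℝ) + ((k ^ (r0 + t * p) : ℕ) : ℝ)) * α + β
        = (k : ℝ) ^ (r0 + t * p) * α + ((j : ℝ) * α + β) := by
      push_cast; ring
    rw [e3, floor_diff_fract]
  -- Fact 2 : a single limiting intercept ρ
  obtain ⟨ρ, hρ0, hρ1, hρ⟩ : ∃ ρ : ℝ, 0 ≤ ρ ∧ ρ ≤ 1 ∧ ∀ t,
      ((u t : ℝ) ≤ (k : ℝ) ^ (r0 + t * p) * α + ρ ∧
        (k : ℝ) ^ (r0 + t * p) * α + ρ ≤ (u t : ℝ) + 1) := by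
    choose θ hθ0 hθ1 hθ using Fact1
    obtain ⟨ρ, hρmem, ψ, hψmono, hψtend⟩ :=
      (isCompact_Icc : IsCompact (Set.Icc (0:ℝ) 1)).tendsto_subseq
        (x := θ) (fun n => ⟨hθ0 n, le_of_lt (hθ1 n)⟩)
    refine ⟨ρ, hρmem.1, hρmem.2, ?_⟩
    intro t
    have hev1 : ∀ᶠ m in Filter.atTop,
        (u t : ℝ) ≤ (k : ℝ) ^ (r0 + t * p) * α + θ (ψ m) := by
      filter_upwards [Filter.eventually_ge_atTop t] with m hm
      have h := hθ (ψ m) t (le_trans hm hψmono.le_apply)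
      rw [h]
      exact Int.floor_le _
    have hev2 : ∀ᶠ m in Filter.atTop,
        (k : ℝ) ^ (r0 + t * p) * α + θ (ψ m) ≤ (u t : ℝ) + 1 := by
      filter_upwards [Filter.eventually_ge_atTop t] with m hm
      have h := hθ (ψ m) t (le_trans hm hψmono.le_apply)
      have := Int.lt_floor_add_one ((k : ℝ) ^ (r0 + t * p) * α + θ (ψ m))
      rw [← h] at this
      linarith
    have htend : Filter.Tendsto (fun m => (k : ℝ) ^ (r0 + t * p) * α + θ (ψ m))
        Filter.atTop (nhds ((k : ℝ) ^ (r0 + t * p) * α + ρ)) :=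
      (Filter.Tendsto.const_add _ hψtend)
    exact ⟨ge_of_tendsto htend hev1, le_of_tendsto htend hev2⟩
  set G : ℕ → ℝ := fun t => (k : ℝ) ^ (r0 + t * p) * α with hGdef
  have hγstep : ∀ t : ℕ, G (t + 1) = (k : ℝ) ^ p * G t := by
    intro t
    simp only [hGdef]
    rw [show r0 + (t + 1) * p = p + (r0 + t * p) from by ring, pow_add]
    ring
  have hKR1 : (1 : ℝ) < (k : ℝ) ^ p := by
    apply one_lt_pow₀
    · exact_mod_cast by omega
    · omega
  have hKRpos : (0 : ℝ) < (k : ℝ) ^ p := by positivity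
  set K : ℤ := (k : ℤ) ^ p with hKdef
  have hKcast : ((K : ℤ) : ℝ) = (k : ℝ) ^ p := by
    rw [hKdef]; push_cast; ring
  set w : ℕ → ℤ := fun i => u (i + 1) - K * u i with hwdef
  have hwcast : ∀ i, ((w i : ℤ) : ℝ) = (u (i + 1) : ℝ) - (k : ℝ) ^ p * (u i : ℝ) := by
    intro i
    simp only [hwdef]
    push_cast
    rw [hKcast]
  have hwbound : ∀ i, -K ≤ w i ∧ w i ≤ K := by
    intro i
    have h1 := hρ i
    have h2 := hρ (i + 1)
    have hg : (k : ℝ) ^ (r0 + (i + 1) * p) * α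
        = (k : ℝ) ^ p * ((k : ℝ) ^ (r0 + i * p) * α) := by
      rw [show r0 + (i + 1) * p = p + (r0 + i * p) from by ring, pow_add]; ring
    have hB1 : (k : ℝ) ^ p * ((k : ℝ) ^ (r0 + i * p) * α + ρ)
        ≤ (k : ℝ) ^ p * ((u i : ℝ) + 1) := mul_le_mul_of_nonneg_left h1.2 hKRpos.le
    have hB2 : (k : ℝ) ^ p * (u i : ℝ)
        ≤ (k : ℝ) ^ p * ((k : ℝ) ^ (r0 + i * p) * α + ρ) :=
      mul_le_mul_of_nonneg_left h1.1 hKRpos.le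
    have hρK : 0 ≤ ρ * ((k : ℝ) ^ p - 1) := mul_nonneg hρ0 (by linarith)
    have hρK' : ρ * ((k : ℝ) ^ p - 1) ≤ (k : ℝ) ^ p - 1 :=
      mul_le_of_le_one_left (by linarith) hρ1
    constructor
    · rw [← @Int.cast_le ℝ, Int.cast_neg, hKcast, hwcast]
      linarith [h2.2, hB2, hg, hρK']
    · rw [← @Int.cast_le ℝ, hKcast, hwcast]
      linarith [h2.1, hB1, hg, hρK]
  -- the span of state-count sequences
  set NS : (↥Ker → ℤ) → (ℕ → ℝ) := fun v => fun i =>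
      ((∑ t ∈ (Finset.range (k ^ (r0 + i * p))).attach,
        v ⟨fun n => x (n * k ^ (r0 + i * p) + t.1),
          memKer _ t.1 (Finset.mem_range.mp t.2)⟩ : ℤ) : ℝ) with hNSdef
  have hNS0 : ∀ (m i : ℕ), (∑ t ∈ (Finset.range (k ^ (r0 + i * p))).attach,
      F m ⟨fun n => x (n * k ^ (r0 + i * p) + t.1),
        memKer _ t.1 (Finset.mem_range.mp t.2)⟩) = Nc (r0 + i * p) m := by
    intro m i
    exact Finset.sum_attach _ (fun t => x (m * k ^ (r0 + i * p) + t))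
  have hNSF : ∀ m : ℕ, NS (F m) = fun i => ((Nc (r0 + i * p) m : ℤ) : ℝ) := by
    intro m
    funext i
    exact congrArg Int.cast (hNS0 m i)
  set SS : Set (ℕ → ℝ) := NS '' (Set.range F) with hSSdef
  have hSS : SS.Finite := hFr.image NS
  set E := Submodule.span ℝ SS with hEdef
  have hmemE : ∀ m : ℕ, (fun i => ((Nc (r0 + i * p) m : ℤ) : ℝ)) ∈ E := by
    intro m
    apply Submodule.subset_span
    exact ⟨F m, ⟨m, rfl⟩, hNSF m⟩
  set shiftL : (ℕ → ℝ) →ₗ[ℝ] (ℕ → ℝ) :=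
    { toFun := fun h i => h (i + 1),
      map_add' := fun f g => rfl,
      map_smul' := fun c f => rfl } with hshiftLdef
  have hshift : ∀ h ∈ E, shiftL h ∈ E := by
    have hle : E ≤ E.comap shiftL := by
      rw [hEdef, Submodule.span_le]
      rintro f ⟨v, ⟨m, rfl⟩, rfl⟩
      simp only [SetLike.mem_coe, Submodule.mem_comap]
      rw [hNSF m]
      have he : shiftL (fun i => ((Nc (r0 + i * p) m : ℤ) : ℝ))
          = ∑ c ∈ Finset.range (k ^ p),
              (fun i => ((Nc (r0 + i * p) (m * k ^ p + c) : ℤ) : ℝ)) := by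
        funext i
        show ((Nc (r0 + (i + 1) * p) m : ℤ) : ℝ) = _
        rw [show r0 + (i + 1) * p = (r0 + i * p) + p from by ring, NRec p (r0 + i * p) m]
        rw [Finset.sum_apply]
        push_cast
        rfl
      rw [he]
      exact Submodule.sum_mem _ (fun c _ => hmemE _)
    intro h hh
    exact hle hh
  have huE : (fun i => ((u i : ℤ) : ℝ)) ∈ E := hmemE m_v
  have hwE : (fun i => ((w i : ℤ) : ℝ)) ∈ E := by
    have he : (fun i => ((w i : ℤ) : ℝ))
        = shiftL (fun i => ((u i : ℤ) : ℝ)) - ((K : ℤ) : ℝ) • (fun i => ((u i : ℤ) : ℝ)) := by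
      funext i
      show ((w i : ℤ) : ℝ) = ((u (i + 1) : ℤ) : ℝ) - ((K : ℤ) : ℝ) * ((u i : ℤ) : ℝ)
      rw [hwcast, hKcast]
    rw [he]
    exact Submodule.sub_mem _ (hshift _ huE) (Submodule.smul_mem _ _ huE)
  have hWE : ∀ jj : ℕ, (fun i => ((w (i + jj) : ℤ) : ℝ)) ∈ E := by
    intro jj
    induction jj with
    | zero => simpa using hwE
    | succ jj ih =>
        have h2 := hshift _ ih
        have he : shiftL (fun i => ((w (i + jj) : ℤ) : ℝ))
            = (fun i => ((w (i + (jj + 1)) : ℤ) : ℝ)) := by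
          funext i
          show ((w (i + 1 + jj) : ℤ) : ℝ) = _
          rw [show i + 1 + jj = i + (jj + 1) from by ring]
        rwa [he] at h2
  -- linear dependence of shifted w-sequences
  haveI : Fintype ↥SS := hSS.fintype
  set nDim : ℕ := SS.toFinset.card with hnDimdef
  haveI : FiniteDimensional ℝ ↥E := FiniteDimensional.span_of_finite ℝ hSS
  have hdep : ¬ LinearIndependent ℝ
      (fun jj : Fin (nDim + 1) => (⟨fun i => ((w (i + jj.1) : ℤ) : ℝ), hWE jj.1⟩ : ↥E)) := by
    intro hli
    have h1 := hli.fintype_card_le_finrank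
    have h2 : Module.finrank ℝ ↥E ≤ nDim := finrank_span_le_card SS
    rw [Fintype.card_fin] at h1
    omega
  rw [Fintype.not_linearIndependent_iff] at hdep
  obtain ⟨g, hgsum, jj0, hgjj0⟩ := hdep
  have hrel : ∀ i : ℕ, ∑ jj : Fin (nDim + 1), g jj * ((w (i + jj.1) : ℤ) : ℝ) = 0 := by
    intro i
    have h0 := congrArg Subtype.val hgsum
    rw [AddSubmonoidClass.coe_finset_sum] at h0
    have h1 := congrFun h0 i
    rw [Finset.sum_apply] at h1
    convert h1 using 2 with jj
    all_goals simp
  -- largest index with nonzero coefficient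
  set sup := Finset.univ.filter (fun jj : Fin (nDim + 1) => g jj ≠ 0) with hsupdef
  have hsupne : sup.Nonempty := ⟨jj0, by simp [hsupdef, hgjj0]⟩
  set dF := sup.max' hsupne with hdFdef
  set d : ℕ := (dF : ℕ) with hddef
  have hgd : g dF ≠ 0 := (Finset.mem_filter.mp (sup.max'_mem hsupne)).2
  have hgt : ∀ jj, dF < jj → g jj = 0 := by
    intro jj h
    by_contra hne
    exact absurd (Finset.le_max' sup jj (by simp [hsupdef, hne])) (not_le.mpr h)
  -- forward determinism
  have Det : ∀ i i', (∀ l, l < d → w (i + l) = w (i' + l)) → w (i + d) = w (i' + d) := by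
    intro i i' hl
    have split : ∀ ii : ℕ, (∑ jj ∈ Finset.univ.erase dF, g jj * ((w (ii + jj.1) : ℤ) : ℝ))
        + g dF * ((w (ii + d) : ℤ) : ℝ)
        = ∑ jj : Fin (nDim + 1), g jj * ((w (ii + jj.1) : ℤ) : ℝ) := by
      intro ii
      exact Finset.sum_erase_add _ _ (Finset.mem_univ dF)
    have hsame : (∑ jj ∈ Finset.univ.erase dF, g jj * ((w (i + jj.1) : ℤ) : ℝ))
        = ∑ jj ∈ Finset.univ.erase dF, g jj * ((w (i' + jj.1) : ℤ) : ℝ) := by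
      apply Finset.sum_congr rfl
      intro jj hjj
      have hne : jj ≠ dF := (Finset.mem_erase.mp hjj).1
      rcases lt_or_gt_of_ne hne with h | h
      · rw [hl jj.1 h]
      · rw [hgt jj h]; ring
    have h1 := hrel i
    have h2 := hrel i'
    rw [← split i] at h1
    rw [← split i'] at h2
    have e2 : g dF * ((w (i + d) : ℤ) : ℝ) = g dF * ((w (i' + d) : ℤ) : ℝ) := by
      rw [hsame] at h1
      linarith
    have := mul_left_cancel₀ hgd e2
    exact_mod_cast this
  -- pigeonhole on d-tuples of w-values
  obtain ⟨i₁, i₂, hi12, htupeq⟩ : ∃ i₁ i₂, i₁ < i₂ ∧ ∀ l, l < d → w (i₁ + l) = w (i₂ + l) := by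
    set tup : ℕ → (Fin d → ℤ) := fun i l => w (i + l.1) with htupdef
    have hrange : (Set.range tup).Finite := by
      apply Set.Finite.subset (Set.Finite.pi (fun _ : Fin d => Set.finite_Icc (-K) K))
      rintro f ⟨i, rfl⟩
      intro l _
      exact Set.mem_Icc.mpr ⟨(hwbound _).1, (hwbound _).2⟩
    haveI := hrange.to_subtype
    obtain ⟨i₁, i₂, hne, heq⟩ := Finite.exists_ne_map_eq_of_infinite
      (fun i : ℕ => (⟨tup i, ⟨i, rfl⟩⟩ : ↥(Set.range tup)))
    have heq' : tup i₁ = tup i₂ := by simpa using congrArg Subtype.val heq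
    rcases hne.lt_or_gt with h | h
    · exact ⟨i₁, i₂, h, fun l hl => congrFun heq' ⟨l, hl⟩⟩
    · exact ⟨i₂, i₁, h, fun l hl => (congrFun heq' ⟨l, hl⟩).symm⟩
  set P : ℕ := i₂ - i₁ with hPdef
  have hPpos : 1 ≤ P := by omega
  have claim : ∀ t l, l ≤ d → w (i₁ + t + l) = w (i₂ + t + l) := by
    intro t
    induction t with
    | zero =>
        intro l hl
        rcases lt_or_eq_of_le hl with h | h
        · simpa using htupeq l h
        · subst h
          simpa using Det i₁ i₂ (fun l' hl' => by simpa using htupeq l' hl')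
    | succ t ih =>
        intro l hl
        rcases lt_or_eq_of_le hl with h | h
        · have := ih (l + 1) (by omega)
          rw [show i₁ + (t + 1) + l = i₁ + t + (l + 1) from by ring,
            show i₂ + (t + 1) + l = i₂ + t + (l + 1) from by ring]
          exact this
        · subst h
          exact Det (i₁ + (t + 1)) (i₂ + (t + 1)) (fun l' hl' => by
            rw [show i₁ + (t + 1) + l' = i₁ + t + (l' + 1) from by ring,
              show i₂ + (t + 1) + l' = i₂ + t + (l' + 1) from by ring]
            exact ih (l' + 1) (by omega))
  have hper : ∀ m, i₁ ≤ m → w (m + P) = w m := by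
    intro m hm
    have h0 := claim (m - i₁) 0 (Nat.zero_le d)
    rw [show i₁ + (m - i₁) + 0 = m from by omega,
      show i₂ + (m - i₁) + 0 = m + P from by omega] at h0
    exact h0.symm
  -- the endgame : rigid dynamics of the fractional parts
  set φ : ℕ → ℝ := fun t => (k : ℝ) ^ (r0 + t * p) * α + ρ - (u t : ℝ) with hφdef
  have hφ01 : ∀ t, 0 ≤ φ t ∧ φ t ≤ 1 := by
    intro t
    have h := hρ t
    constructor
    · simp only [hφdef]; linarith [h.1]
    · simp only [hφdef]; linarith [h.2]
  have hφstep : ∀ t, φ (t + 1) = (k : ℝ) ^ p * (φ t - ρ) + ρ - ((w t : ℤ) : ℝ) := by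
    intro t
    simp only [hφdef]
    rw [hwcast]
    rw [show r0 + (t + 1) * p = p + (r0 + t * p) from by ring, pow_add]
    ring
  have hD : ∀ t, φ (i₁ + t + P) - φ (i₁ + t) = ((k : ℝ) ^ p) ^ t * (φ (i₁ + P) - φ i₁) := by
    intro t
    induction t with
    | zero => simp
    | succ t ih =>
        have hstep : φ ((i₁ + t + P) + 1) - φ ((i₁ + t) + 1)
            = (k : ℝ) ^ p * (φ (i₁ + t + P) - φ (i₁ + t)) := by
          rw [hφstep, hφstep, hper (i₁ + t) (by omega)]
          ring
        rw [show i₁ + (t + 1) + P = (i₁ + t + P) + 1 from by ring,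
          show i₁ + (t + 1) = (i₁ + t) + 1 from by ring, hstep, ih, pow_succ]
        ring
  have hΔ0 : φ (i₁ + P) - φ i₁ = 0 := by
    by_contra hne
    have hΔpos : 0 < |φ (i₁ + P) - φ i₁| := abs_pos.mpr (sub_ne_zero.mpr (by
      intro hh; exact hne (by rw [hh]; ring)))
    obtain ⟨t, ht⟩ := pow_unbounded_of_one_lt (1 / |φ (i₁ + P) - φ i₁|) hKR1
    have h1 := hD t
    have h2 : |φ (i₁ + t + P) - φ (i₁ + t)| ≤ 1 := by
      have a1 := hφ01 (i₁ + t + P)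
      have a2 := hφ01 (i₁ + t)
      rw [abs_le]
      constructor <;> linarith [a1.1, a1.2, a2.1, a2.2]
    rw [h1, abs_mul, abs_pow, abs_of_pos hKRpos] at h2
    have h3 : 1 / |φ (i₁ + P) - φ i₁| * |φ (i₁ + P) - φ i₁|
        < ((k : ℝ) ^ p) ^ t * |φ (i₁ + P) - φ i₁| :=
      mul_lt_mul_of_pos_right ht hΔpos
    rw [one_div_mul_cancel (ne_of_gt hΔpos)] at h3
    linarith
  -- conclude that α is rational : contradiction
  have hdiff : (k : ℝ) ^ (r0 + (i₁ + P) * p) * α - (k : ℝ) ^ (r0 + i₁ * p) * α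
      = ((u (i₁ + P) - u i₁ : ℤ) : ℝ) := by
    have h := hΔ0
    simp only [hφdef] at h
    push_cast
    linarith
  have he12 : r0 + i₁ * p < r0 + (i₁ + P) * p := by
    have hmm : (i₁ + P) * p = i₁ * p + P * p := by ring
    have hPp : p ≤ P * p := Nat.le_mul_of_pos_left p (by omega)
    omega
  have hdenpos : (k : ℝ) ^ (r0 + i₁ * p) < (k : ℝ) ^ (r0 + (i₁ + P) * p) := by
    apply pow_lt_pow_right₀ (by exact_mod_cast by omega : (1:ℝ) < (k:ℝ)) he12
  apply hα
  refine ⟨((u (i₁ + P) - u i₁ : ℤ) : ℚ)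
      / ((k : ℚ) ^ (r0 + (i₁ + P) * p) - (k : ℚ) ^ (r0 + i₁ * p)), ?_⟩
  push_cast
  push_cast at hdiff
  rw [div_eq_iff (sub_ne_zero.mpr hdenpos.ne')]
  linarith [hdiff]
end

section
/- Let k ≥ 2 be an integer, let x : ℕ → A be a sequence over a finite alphabet A whose k-kernel is finite, and let α be irrational with 0 < α < 1. Define the characteristic Sturmian sequence a : ℕ → ℕ by a(n) = 1 if the fractional part {(n+1)α} < α and a(n) = 0 otherwise. Then there exists a constant C such that any common factor of x and a has length at most C; that is, if x(i+t) = a(j+t) for all 0 ≤ t < L for some indices i, j, then L ≤ C. -/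
set_option maxHeartbeats 1000000


/-- peel a fract inside a sum -/
lemma fract_peel (u y : ℝ) : Int.fract (Int.fract u + y) = Int.fract (u + y) := by
  refine Int.fract_eq_fract.mpr ⟨-⌊u⌋, ?_⟩
  have h := Int.floor_add_fract u
  push_cast
  linarith

lemma fract_peel_mul (A : ℝ) (m : ℕ) (z : ℝ) :
    Int.fract (A + m * Int.fract z) = Int.fract (A + m * z) := by
  refine Int.fract_eq_fract.mpr ⟨-(m * ⌊z⌋), ?_⟩
  have h := Int.floor_add_fract z
  push_cast
  nlinarith [h]

/-- membership transfer across an interval -/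
lemma interval_mem_iff {p q θ θ' : ℝ} (hpq : p < q) (hlt : θ < θ')
    (h1 : θ ≠ p) (h2 : θ ≠ q) (h3 : θ' ≠ p) (h4 : θ' ≠ q)
    (hmem : (p ≤ θ ∧ θ < q) ↔ (p ≤ θ' ∧ θ' < q)) :
    ((θ ≤ p ∧ p < θ') ↔ (θ ≤ q ∧ q < θ')) := by
  constructor
  · rintro ⟨hp1, hp2⟩
    have hθp : θ < p := lt_of_le_of_ne hp1 h1
    have hθnot : ¬(p ≤ θ ∧ θ < q) := fun h => absurd h.1 (not_le.mpr hθp)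
    have hθ'not : ¬(p ≤ θ' ∧ θ' < q) := fun h => hθnot (hmem.mpr h)
    have hq' : ¬ (θ' < q) := fun h => hθ'not ⟨hp2.le, h⟩
    push_neg at hq'
    exact ⟨by linarith, lt_of_le_of_ne hq' (Ne.symm h4)⟩
  · rintro ⟨hq1, hq2⟩
    have hθq : θ < q := lt_of_le_of_ne hq1 h2
    have hθ'notin : ¬(p ≤ θ' ∧ θ' < q) := fun h => absurd hq2 (not_lt.mpr h.2.le)
    have hθnot : ¬(p ≤ θ ∧ θ < q) := fun h => hθ'notin (hmem.mp h)
    have hp' : ¬(p ≤ θ) := fun h => hθnot ⟨h, hθq⟩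
    push_neg at hp'
    exact ⟨hp'.le, by linarith⟩

/-- chain lemma -/
lemma chain_iff (P : ℕ → Prop) (n : ℕ) (h : ∀ s, s < n → (P (s+1) ↔ P s)) :
    ∀ s, s ≤ n → (P s ↔ P 0) := by
  intro s hs
  induction s with
  | zero => exact Iff.rfl
  | succ t ih => exact (h t (by omega)).trans (ih (by omega))

lemma ite_eq_ite_iff {A B : Prop} [Decidable A] [Decidable B]
    (h : (if A then (1:ℕ) else 0) = (if B then 1 else 0)) : (A ↔ B) := by
  by_cases h1 : A <;> by_cases h2 : B <;> simp [h1, h2] at h ⊢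

lemma flip_iff {α P Q θ θ' : ℝ} (hα0 : 0 < α) (hα1 : α < 1)
    (hP0 : 0 ≤ P) (hP1 : P < 1) (hQ : Q = Int.fract (P + α))
    (hθ0 : 0 ≤ θ) (hθ1 : θ < 1) (hθ'0 : 0 ≤ θ') (hθ'1 : θ' < 1)
    (hlt : θ < θ') (hθP : θ ≠ P) (hθ'P : θ' ≠ P) (hθQ : θ ≠ Q) (hθ'Q : θ' ≠ Q)
    (hval : (Int.fract (θ - P) < α ↔ Int.fract (θ' - P) < α)) :
    ((θ ≤ P ∧ P < θ') ↔ (θ ≤ Q ∧ Q < θ')) := by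
  have key : ∀ ψ : ℝ, P ≤ ψ → ψ < 1 → Int.fract (ψ - P) = ψ - P := fun ψ h1 h2 =>
    Int.fract_eq_self.mpr ⟨by linarith, by linarith⟩
  have key2 : ∀ ψ : ℝ, 0 ≤ ψ → ψ < P → Int.fract (ψ - P) = ψ - P + 1 := by
    intro ψ h1 h2
    have e1 : Int.fract (ψ - P) = Int.fract (ψ - P + 1) := by
      refine Int.fract_eq_fract.mpr ⟨-1, ?_⟩; push_cast; ring
    rw [e1, Int.fract_eq_self.mpr ⟨by linarith, by linarith⟩]
  by_cases hcase : P + α < 1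
  · have hQ' : Q = P + α := by rw [hQ, Int.fract_eq_self.mpr ⟨by linarith, hcase⟩]
    subst hQ'
    have mem : ∀ ψ : ℝ, 0 ≤ ψ → ψ < 1 →
        (Int.fract (ψ - P) < α ↔ (P ≤ ψ ∧ ψ < P + α)) := by
      intro ψ h1 h2
      by_cases h : P ≤ ψ
      · rw [key ψ h h2]
        constructor
        · intro hh; exact ⟨h, by linarith⟩
        · intro hh; linarith [hh.2]
      · push_neg at h
        rw [key2 ψ h1 h]
        constructor
        · intro hh; linarith
        · intro hh; linarith [hh.1]
    rw [mem θ hθ0 hθ1, mem θ' hθ'0 hθ'1] at hval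
    exact interval_mem_iff (by linarith) hlt hθP hθQ hθ'P hθ'Q hval
  · push_neg at hcase
    have hQ' : Q = P + α - 1 := by
      have e1 : Int.fract (P + α) = Int.fract (P + α - 1) := by
        refine Int.fract_eq_fract.mpr ⟨1, ?_⟩; push_cast; ring
      rw [hQ, e1, Int.fract_eq_self.mpr ⟨by linarith, by linarith⟩]
    subst hQ'
    have mem : ∀ ψ : ℝ, 0 ≤ ψ → ψ < 1 →
        (Int.fract (ψ - P) < α ↔ ¬((P + α - 1) ≤ ψ ∧ ψ < P)) := by
      intro ψ h1 h2
      by_cases h : P ≤ ψ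
      · rw [key ψ h h2]
        constructor
        · intro hh hc; linarith [hc.2]
        · intro _; linarith
      · push_neg at h
        rw [key2 ψ h1 h]
        constructor
        · intro hh hc; linarith [hc.1]
        · intro hh
          by_contra hc
          exact hh ⟨by linarith, h⟩
    rw [mem θ hθ0 hθ1, mem θ' hθ'0 hθ'1] at hval
    have hmem := not_iff_not.mp hval
    have := interval_mem_iff (show P + α - 1 < P by linarith) hlt hθQ hθP hθ'Q hθ'P hmem
    exact this.symm


lemma exists_small_step (β : ℝ) (hβ : Irrational β) (ρ : ℝ) (hρ : 0 < ρ) :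
    ∃ q : ℕ, 1 ≤ q ∧ 0 < Int.fract ((q:ℝ) * β) ∧
      (Int.fract ((q:ℝ) * β) < ρ ∨ 1 - ρ < Int.fract ((q:ℝ) * β)) := by
  classical
  set N : ℕ := ⌈ρ⁻¹⌉₊ + 1 with hN
  have hNpos : 0 < (N:ℝ) := by positivity
  have hρN : 1 < ρ * N := by
    have h1 : ρ⁻¹ < (N:ℝ) := by
      have h2 : (⌈ρ⁻¹⌉₊ : ℝ) < N := by exact_mod_cast Nat.lt_succ_self _
      linarith [Nat.le_ceil ρ⁻¹]
    calc (1:ℝ) = ρ * ρ⁻¹ := by field_simp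
    _ < ρ * N := by apply mul_lt_mul_of_pos_left h1 hρ
  have main : ∀ m1 m2 : ℕ, m1 < m2 →
      ⌊(N:ℝ) * Int.fract ((m1:ℝ) * β)⌋₊ = ⌊(N:ℝ) * Int.fract ((m2:ℝ) * β)⌋₊ →
      ∃ q : ℕ, 1 ≤ q ∧ 0 < Int.fract ((q:ℝ) * β) ∧
        (Int.fract ((q:ℝ) * β) < ρ ∨ 1 - ρ < Int.fract ((q:ℝ) * β)) := by
    intro m1 m2 hlt hv
    have g1 : (0:ℝ) ≤ Int.fract ((m1:ℝ) * β) := Int.fract_nonneg _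
    have g2 : (0:ℝ) ≤ Int.fract ((m2:ℝ) * β) := Int.fract_nonneg _
    have g3 : Int.fract ((m1:ℝ) * β) < 1 := Int.fract_lt_one _
    have g4 : Int.fract ((m2:ℝ) * β) < 1 := Int.fract_lt_one _
    have b1 : (⌊(N:ℝ) * Int.fract ((m1:ℝ) * β)⌋₊ : ℝ) ≤ (N:ℝ) * Int.fract ((m1:ℝ) * β) :=
      Nat.floor_le (mul_nonneg hNpos.le g1)
    have b2 : (N:ℝ) * Int.fract ((m1:ℝ) * β) < ⌊(N:ℝ) * Int.fract ((m1:ℝ) * β)⌋₊ + 1 :=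
      Nat.lt_floor_add_one _
    have b3 : (⌊(N:ℝ) * Int.fract ((m2:ℝ) * β)⌋₊ : ℝ) ≤ (N:ℝ) * Int.fract ((m2:ℝ) * β) :=
      Nat.floor_le (mul_nonneg hNpos.le g2)
    have b4 : (N:ℝ) * Int.fract ((m2:ℝ) * β) < ⌊(N:ℝ) * Int.fract ((m2:ℝ) * β)⌋₊ + 1 :=
      Nat.lt_floor_add_one _
    rw [hv] at b1 b2
    set d : ℝ := Int.fract ((m2:ℝ) * β) - Int.fract ((m1:ℝ) * β) with hd
    have hNd1 : (N:ℝ) * d < 1 := by rw [hd]; nlinarith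
    have hNd2 : -1 < (N:ℝ) * d := by rw [hd]; nlinarith
    have habs1 : d < ρ := by
      by_contra hcon
      push_neg at hcon
      have : (N:ℝ) * ρ ≤ N * d := mul_le_mul_of_nonneg_left hcon hNpos.le
      nlinarith
    have habs2 : -ρ < d := by
      by_contra hcon
      push_neg at hcon
      have : (N:ℝ) * d ≤ N * (-ρ) := mul_le_mul_of_nonneg_left hcon hNpos.le
      nlinarith
    set q : ℕ := m2 - m1 with hq
    have hq1 : 1 ≤ q := by omega
    have hqc : (q:ℝ) = (m2:ℝ) - (m1:ℝ) := by
      have : (q:ℕ) + m1 = m2 := by omega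
      have := congrArg (fun t : ℕ => (t:ℝ)) this
      push_cast at this
      linarith
    have hfr : Int.fract ((q:ℝ) * β) = Int.fract d := by
      refine Int.fract_eq_fract.mpr ⟨⌊(m2:ℝ) * β⌋ - ⌊(m1:ℝ) * β⌋, ?_⟩
      have e1 := Int.floor_add_fract ((m1:ℝ) * β)
      have e2 := Int.floor_add_fract ((m2:ℝ) * β)
      rw [hqc, hd]
      push_cast
      linarith
    have hirr : Irrational ((q:ℝ) * β) := hβ.natCast_mul (by omega)
    have hfr0 : 0 < Int.fract ((q:ℝ) * β) := by
      rcases lt_or_eq_of_le (Int.fract_nonneg ((q:ℝ) * β)) with h | h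
      · exact h
      · exfalso
        have : ((q:ℝ) * β) = (⌊(q:ℝ) * β⌋ : ℝ) := by
          have := Int.floor_add_fract ((q:ℝ) * β); linarith
        exact hirr.ne_int _ this
    refine ⟨q, hq1, hfr0, ?_⟩
    rcases le_or_gt 0 d with hcase | hcase
    · left
      have hlt1 : d < 1 := by rw [hd]; linarith
      rw [hfr, Int.fract_eq_self.mpr ⟨hcase, hlt1⟩]
      exact habs1
    · right
      have hgt : -1 < d := by rw [hd]; linarith
      have e1 : Int.fract d = Int.fract (d + 1) := by
        refine Int.fract_eq_fract.mpr ⟨-1, ?_⟩; push_cast; ring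
      rw [hfr, e1, Int.fract_eq_self.mpr ⟨by linarith, by linarith⟩]
      linarith
  have hcard : Fintype.card (Fin N) < Fintype.card (Fin (N+1)) := by simp
  set f : Fin (N+1) → Fin N := fun m =>
    ⟨⌊(N:ℝ) * Int.fract (((m:ℕ):ℝ) * β)⌋₊, by
      have h0 : (N:ℝ) * Int.fract (((m:ℕ):ℝ) * β) < N := by
        have := Int.fract_lt_one (((m:ℕ):ℝ) * β)
        have := Int.fract_nonneg (((m:ℕ):ℝ) * β)
        nlinarith
      exact_mod_cast Nat.floor_lt (mul_nonneg hNpos.le (Int.fract_nonneg _)) |>.mpr h0⟩ with hf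
  obtain ⟨m1, m2, hne, heq⟩ := Fintype.exists_ne_map_eq_of_card_lt f hcard
  have heq' : ⌊(N:ℝ) * Int.fract (((m1:ℕ):ℝ) * β)⌋₊ = ⌊(N:ℝ) * Int.fract (((m2:ℕ):ℝ) * β)⌋₊ :=
    congrArg Fin.val heq
  rcases Nat.lt_or_ge (m1:ℕ) (m2:ℕ) with h | h
  · exact main m1 m2 h heq'
  · have h' : (m2:ℕ) < (m1:ℕ) := by
      rcases Nat.lt_or_ge (m2:ℕ) (m1:ℕ) with h2 | h2
      · exact h2
      · exact absurd (Fin.ext (le_antisymm h2 h)) hne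
    exact main m2 m1 h' heq'.symm

lemma window_hit (β : ℝ) (hβ : Irrational β) (ρ : ℝ) (hρ : 0 < ρ) :
    ∃ M : ℕ, ∀ δ p q' : ℝ, 0 ≤ δ → δ < 1 → 0 ≤ p → q' < 1 → ρ ≤ q' - p →
      ∃ m : ℕ, m < M ∧ p < Int.fract (δ + m * β) ∧ Int.fract (δ + m * β) < q' := by
  classical
  obtain ⟨q, hq1, hηpos, hcase⟩ := exists_small_step β hβ (ρ/2) (by linarith)
  set η : ℝ := Int.fract ((q:ℝ) * β) with hη
  have hη1 : η < 1 := Int.fract_lt_one _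
  have hfl := Int.floor_add_fract ((q:ℝ) * β)
  rcases hcase with hsmall | hlarge
  · -- increasing walk with step η < ρ/2
    set J : ℕ := ⌈(2:ℝ)/η⌉₊ with hJ
    have hJη : 2 ≤ (J:ℝ) * η := by
      have h1 : (2:ℝ)/η ≤ J := Nat.le_ceil _
      calc (2:ℝ) = (2/η) * η := by field_simp
      _ ≤ (J:ℝ) * η := mul_le_mul_of_nonneg_right h1 hηpos.le
    refine ⟨J * q + 1, ?_⟩
    intro δ p q' hδ0 hδ1 hp0 hq'1 hgap
    have hex : ∃ jj : ℕ, 1 + p < δ + jj * η := by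
      refine ⟨J, ?_⟩
      have : p < 1 := by linarith
      nlinarith
    set j : ℕ := Nat.find hex with hj
    have hjs : 1 + p < δ + j * η := Nat.find_spec hex
    have hj1 : 1 ≤ j := by
      by_contra hcon
      push_neg at hcon
      interval_cases j
      · simp at hjs; linarith
    have hjm : ¬(1 + p < δ + ((j - 1 : ℕ):ℝ) * η) := Nat.find_min hex (by omega)
    push_neg at hjm
    have hcast : ((j - 1 : ℕ):ℝ) = (j:ℝ) - 1 := by
      rw [Nat.cast_sub hj1]; norm_num
    rw [hcast] at hjm
    -- value
    have hub : δ + j * η ≤ 1 + p + η := by nlinarith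
    have hval : Int.fract (δ + (j*q : ℕ) * β) = δ + j * η - 1 := by
      have e1 : Int.fract (δ + (j*q : ℕ) * β) = Int.fract (δ + j * η) := by
        refine Int.fract_eq_fract.mpr ⟨j * ⌊(q:ℝ) * β⌋, ?_⟩
        push_cast
        nlinarith [hfl]
      have e2 : Int.fract (δ + j * η) = Int.fract (δ + j * η - 1) := by
        refine Int.fract_eq_fract.mpr ⟨1, ?_⟩; push_cast; ring
      rw [e1, e2, Int.fract_eq_self.mpr ⟨by linarith, by nlinarith⟩]
    refine ⟨j * q, ?_, ?_, ?_⟩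
    · have hjJ : j ≤ J := Nat.find_le (by
        have : p < 1 := by linarith
        nlinarith)
      calc j * q ≤ J * q := Nat.mul_le_mul_right _ hjJ
      _ < J * q + 1 := Nat.lt_succ_self _
    · rw [hval]; linarith
    · rw [hval]; nlinarith
  · -- decreasing walk with step η' = 1 - η < ρ/2
    set η' : ℝ := 1 - η with hη'
    have hη'pos : 0 < η' := by linarith
    have hη's : η' < ρ/2 := by linarith
    set J : ℕ := ⌈(2:ℝ)/η'⌉₊ with hJ
    have hJη : 2 ≤ (J:ℝ) * η' := by
      have h1 : (2:ℝ)/η' ≤ J := Nat.le_ceil _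
      calc (2:ℝ) = (2/η') * η' := by field_simp
      _ ≤ (J:ℝ) * η' := mul_le_mul_of_nonneg_right h1 hη'pos.le
    refine ⟨J * q + 1, ?_⟩
    intro δ p q' hδ0 hδ1 hp0 hq'1 hgap
    have hq'pos : 0 < q' := by linarith
    have hex : ∃ jj : ℕ, δ - jj * η' < q' - 1 := by
      refine ⟨J, ?_⟩
      nlinarith
    set j : ℕ := Nat.find hex with hj
    have hjs : δ - j * η' < q' - 1 := Nat.find_spec hex
    have hj1 : 1 ≤ j := by
      by_contra hcon
      push_neg at hcon
      interval_cases j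
      · simp at hjs; linarith
    have hjm : ¬(δ - ((j - 1 : ℕ):ℝ) * η' < q' - 1) := Nat.find_min hex (by omega)
    push_neg at hjm
    have hcast : ((j - 1 : ℕ):ℝ) = (j:ℝ) - 1 := by
      rw [Nat.cast_sub hj1]; norm_num
    rw [hcast] at hjm
    have hlb : q' - 1 - η' ≤ δ - j * η' := by nlinarith
    have hval : Int.fract (δ + (j*q : ℕ) * β) = δ - j * η' + 1 := by
      have e1 : Int.fract (δ + (j*q : ℕ) * β) = Int.fract (δ - j * η') := by
        refine Int.fract_eq_fract.mpr ⟨j * (⌊(q:ℝ) * β⌋ + 1), ?_⟩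
        push_cast
        nlinarith [hfl]
      have e2 : Int.fract (δ - j * η') = Int.fract (δ - j * η' + 1) := by
        refine Int.fract_eq_fract.mpr ⟨-1, ?_⟩; push_cast; ring
      rw [e1, e2, Int.fract_eq_self.mpr ⟨by nlinarith, by nlinarith⟩]
    refine ⟨j * q, ?_, ?_, ?_⟩
    · have hjJ : j ≤ J := Nat.find_le (by nlinarith)
      calc j * q ≤ J * q := Nat.mul_le_mul_right _ hjJ
      _ < J * q + 1 := Nat.lt_succ_self _
    · rw [hval]; nlinarith
    · rw [hval]; nlinarith


/-- **Main theorem (characteristic Sturmian version).**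
Let `k ≥ 2`, let `x : ℕ → ℕ` be a sequence over a finite alphabet whose
`k`-kernel is finite, let `α` be irrational with `0 < α < 1`, and let
`a n = 1` if `{(n+1)α} < α` and `a n = 0` otherwise (the characteristic
Sturmian sequence of slope `α`).  Then there is a constant `C` such that any
common factor of `x` and `a` has length at most `C`. -/
theorem automatic_characteristic_sturmian_common_factor_bounded
    (k : ℕ) (hk : 2 ≤ k)
    (x : ℕ → ℕ) (hfin : (Set.range x).Finite)
    (hkernel : {g : ℕ → ℕ | ∃ r s : ℕ, s < k ^ r ∧
        g = fun n => x (n * k ^ r + s)}.Finite)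
    (α : ℝ) (hα : Irrational α) (hα0 : 0 < α) (hα1 : α < 1)
    (a : ℕ → ℕ)
    (ha : ∀ n : ℕ, a n = if Int.fract (((n : ℝ) + 1) * α) < α then 1 else 0) :
    ∃ C : ℕ, ∀ (L i j : ℕ), (∀ t < L, x (i + t) = a (j + t)) → L ≤ C := by
  classical
  by_contra hC
  push_neg at hC
  haveI : Finite ↥{g : ℕ → ℕ | ∃ r s : ℕ, s < k ^ r ∧ g = fun n => x (n * k ^ r + s)} :=
    hkernel.to_subtype
  set Φ : ℕ → (↥{g : ℕ → ℕ | ∃ r s : ℕ, s < k ^ r ∧ g = fun n => x (n * k ^ r + s)} → ℕ) :=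
    fun j g => (g : ℕ → ℕ) j with hΦdef
  have hΦfin : (Set.range Φ).Finite := by
    apply Set.Finite.subset (Set.Finite.pi (fun _ => hfin))
    rintro f ⟨j, rfl⟩ g _
    obtain ⟨r, s, hs, hgeq⟩ := g.2
    show (g : ℕ → ℕ) j ∈ Set.range x
    rw [hgeq]
    exact ⟨j * k ^ r + s, rfl⟩
  set D : ℕ := hΦfin.toFinset.card with hD
  set r : ℕ := D + 2 with hr
  set n : ℕ := k ^ r with hn
  have hDn : D + 2 < n := by
    have h1 : r < 2 ^ r := Nat.lt_two_pow_self (n := r)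
    have h2 : 2 ^ r ≤ k ^ r := Nat.pow_le_pow_left hk r
    omega
  have hn1 : 1 ≤ n := by omega
  have hβirr : Irrational (Int.fract ((n:ℝ) * α)) := by
    rw [← Int.self_sub_floor]
    exact (hα.natCast_mul (by omega)).sub_intCast _
  set β : ℝ := Int.fract ((n:ℝ) * α) with hβ
  set c : ℕ → ℝ := fun s => Int.fract ((1 - (s:ℝ)) * α) with hc
  have hcinj : ∀ s t : ℕ, c s = c t → s = t := by
    intro s t h
    by_contra hne
    obtain ⟨z, hz⟩ := Int.fract_eq_fract.mp h
    have hm : ((t:ℤ) - s : ℤ) ≠ 0 := by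
      intro hcon
      apply hne
      omega
    have : (((t:ℤ) - s : ℤ):ℝ) * α = (z:ℝ) := by push_cast; linarith
    exact (hα.intCast_mul hm).ne_int z this
  set V : Finset ℝ := (Finset.range (n+1)).image c with hV
  have hVcard : V.card = n + 1 := by
    rw [hV, Finset.card_image_of_injOn fun u _ v _ h => hcinj u v h, Finset.card_range]
  set e := V.orderIsoOfFin hVcard with he
  set vv : ℕ → ℝ := fun l => if h : l < n + 1 then (e ⟨l, h⟩ : ℝ) else 0 with hvv
  have hvvV : ∀ l, l < n + 1 → vv l ∈ V := by
    intro l h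
    simp only [hvv, dif_pos h]
    exact (e ⟨l, h⟩).2
  have hvvlt : ∀ l l', l < l' → l' < n + 1 → vv l < vv l' := by
    intro l l' h1 h2
    have h0 : l < n + 1 := by omega
    simp only [hvv, dif_pos h0, dif_pos h2]
    have : (⟨l, h0⟩ : Fin (n+1)) < ⟨l', h2⟩ := Fin.mk_lt_mk.mpr h1
    exact_mod_cast e.lt_iff_lt.mpr this
  have hvvle : ∀ l l', l ≤ l' → l' < n + 1 → vv l ≤ vv l' := by
    intro l l' h1 h2
    rcases eq_or_lt_of_le h1 with hh | hh
    · rw [hh]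
    · exact (hvvlt l l' hh h2).le
  have hVmem : ∀ u ∈ V, ∃ l, l < n + 1 ∧ vv l = u := by
    intro u hu
    refine ⟨(e.symm ⟨u, hu⟩ : Fin (n+1)), (e.symm ⟨u, hu⟩).2, ?_⟩
    simp only [hvv, dif_pos (e.symm ⟨u, hu⟩).2]
    have : e (e.symm ⟨u, hu⟩) = ⟨u, hu⟩ := e.apply_symm_apply _
    rw [show (⟨((e.symm ⟨u, hu⟩ : Fin (n+1)) : ℕ), (e.symm ⟨u, hu⟩).2⟩ : Fin (n+1))
        = e.symm ⟨u, hu⟩ from rfl, this]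
  have hv01 : ∀ l, l < n + 1 → 0 ≤ vv l ∧ vv l < 1 := by
    intro l h
    obtain ⟨s, _, hseq⟩ := Finset.mem_image.mp (hvvV l h)
    rw [← hseq]
    exact ⟨Int.fract_nonneg _, Int.fract_lt_one _⟩
  obtain ⟨l₀, hl₀mem, hl₀⟩ := Finset.exists_min_image (Finset.range (D+1))
    (fun l => vv (l+1) - vv l) ⟨0, by simp⟩
  have hl₀lt : l₀ < D + 1 := Finset.mem_range.mp hl₀mem
  set ρ : ℝ := vv (l₀+1) - vv l₀ with hρdef
  have hρpos : 0 < ρ := by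
    have := hvvlt l₀ (l₀+1) (Nat.lt_succ_self _) (by omega)
    rw [hρdef]; linarith
  have hρle : ∀ l, l < D + 1 → ρ ≤ vv (l+1) - vv l := fun l hl =>
    hl₀ l (Finset.mem_range.mpr hl)
  obtain ⟨M, hM⟩ := window_hit β hβirr ρ hρpos
  obtain ⟨L, i, j, hcf, hLlt⟩ := hC ((M+2)*n)
  set j₀ : ℕ := i / n + 1 with hj₀
  set o : ℕ := j₀ * n - i with ho
  have hmul1 : j₀ * n = (i / n) * n + n := by rw [hj₀, Nat.add_mul, one_mul]
  have hmul2 : n * (i / n) + i % n = i := Nat.div_add_mod i n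
  have hmul3 : i % n < n := Nat.mod_lt _ (by omega)
  have hmul4 : (i / n) * n = n * (i / n) := Nat.mul_comm _ _
  have hin : i < j₀ * n := by omega
  have hoi : o + i = j₀ * n := by omega
  have hon : o ≤ n := by omega
  set p₀ : ℕ := j + o with hp₀
  set δ : ℝ := Int.fract (((p₀:ℝ) + 1) * α) with hδ
  set θ : ℕ → ℝ := fun m => Int.fract (δ + m * β) with hθdef
  have hxa : ∀ m s : ℕ, m < M → s < n → x ((j₀ + m) * n + s) = a (p₀ + m * n + s) := by
    intro m s hm hs
    have hmn : m * n + n ≤ M * n := by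
      have h1 : m + 1 ≤ M := hm
      calc m * n + n = (m+1) * n := by rw [Nat.add_mul, one_mul]
      _ ≤ M * n := Nat.mul_le_mul_right n h1
    have hMn : (M+2) * n = M * n + 2 * n := by rw [Nat.add_mul]
    have ht : o + (m * n + s) < L := by omega
    have hstep := hcf (o + (m * n + s)) ht
    have hidx : i + (o + (m * n + s)) = (j₀ + m) * n + s := by
      have h2 : (j₀ + m) * n = j₀ * n + m * n := Nat.add_mul _ _ _
      omega
    have hjdx : j + (o + (m * n + s)) = p₀ + m * n + s := by omega
    rw [hidx, hjdx] at hstep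
    exact hstep
  have hθfract : ∀ m : ℕ, θ m = Int.fract ((((p₀ + m * n : ℕ):ℝ) + 1) * α) := by
    intro m
    show Int.fract (δ + m * β) = _
    rw [hδ, hβ, fract_peel_mul, fract_peel]
    congr 1
    push_cast
    ring
  have hθa : ∀ m s : ℕ, a (p₀ + m * n + s)
      = if Int.fract (θ m + s * α) < α then 1 else 0 := by
    intro m s
    rw [ha]
    have hfr : Int.fract ((((p₀ + m * n + s : ℕ):ℝ) + 1) * α)
        = Int.fract (θ m + s * α) := by
      rw [hθfract m, fract_peel]
      congr 1
      push_cast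
      ring
    rw [hfr]
  have hθ01 : ∀ m : ℕ, 0 ≤ θ m ∧ θ m < 1 := fun m =>
    ⟨Int.fract_nonneg _, Int.fract_lt_one _⟩
  have hsel : ∀ l : Fin (D+1), ∃ m, m < M ∧ vv l < θ m ∧ θ m < vv ((l:ℕ)+1) := by
    intro l
    have hl : (l:ℕ) < D + 1 := l.2
    have h1 : (l:ℕ) + 1 < n + 1 := by omega
    have h0 : (l:ℕ) < n + 1 := by omega
    obtain ⟨m, hm, hm1, hm2⟩ := hM δ (vv l) (vv ((l:ℕ)+1))
      (Int.fract_nonneg _) (Int.fract_lt_one _) (hv01 _ h0).1 (hv01 _ h1).2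
      (hρle l hl)
    exact ⟨m, hm, hm1, hm2⟩
  choose mf hmfM hmf1 hmf2 using hsel
  have hcell : ∀ (lc : ℕ), lc < D + 1 → ∀ u ∈ V, u ≤ vv lc ∨ vv (lc+1) ≤ u := by
    intro lc hlc u hu
    obtain ⟨l'', hl''n, hl''⟩ := hVmem u hu
    rcases Nat.lt_or_ge l'' (lc+1) with h | h
    · left; rw [← hl'']; exact hvvle l'' lc (by omega) (by omega)
    · right; rw [← hl'']; exact hvvle (lc+1) l'' h hl''n
  have hθne : ∀ (l : Fin (D+1)) (t : ℕ), t < n + 1 → θ (mf l) ≠ c t := by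
    intro l t ht hEq
    have hmem : c t ∈ V := Finset.mem_image.mpr ⟨t, Finset.mem_range.mpr ht, rfl⟩
    rcases hcell l l.2 (c t) hmem with h | h
    · have := hmf1 l; rw [hEq] at this; linarith
    · have := hmf2 l; rw [hEq] at this; linarith
  have hQP : ∀ s : ℕ, c s = Int.fract (c (s+1) + α) := by
    intro s
    have hw := Int.floor_add_fract ((1 - (((s+1:ℕ)):ℝ)) * α)
    refine Int.fract_eq_fract.mpr ⟨⌊(1 - (((s+1:ℕ)):ℝ)) * α⌋, ?_⟩
    simp only [hc]
    push_cast at hw ⊢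
    linarith
  have hPW : ∀ (ψ : ℝ) (s : ℕ), Int.fract (ψ + s * α) = Int.fract (ψ - c (s+1)) := by
    intro ψ s
    have hw := Int.floor_add_fract ((1 - (((s+1:ℕ)):ℝ)) * α)
    refine Int.fract_eq_fract.mpr ⟨-⌊(1 - (((s+1:ℕ)):ℝ)) * α⌋, ?_⟩
    simp only [hc]
    push_cast at hw ⊢
    linarith
  have hdistinct : ∀ l l' : Fin (D+1), (l:ℕ) < (l':ℕ) →
      Φ (j₀ + mf l) ≠ Φ (j₀ + mf l') := by
    intro l l' hll hPhiEq
    have hl'n : (l':ℕ) + 1 < n + 1 := by have := l'.2; omega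
    have hθab : θ (mf l) < θ (mf l') := by
      have h1 := hmf2 l
      have h2 := hmf1 l'
      have h3 : vv ((l:ℕ)+1) ≤ vv (l':ℕ) := hvvle _ _ (by omega) (by omega)
      linarith
    have hwords : ∀ s, s < n →
        (Int.fract (θ (mf l) + s * α) < α ↔ Int.fract (θ (mf l') + s * α) < α) := by
      intro s hs
      have hgmem : (fun m => x (m * n + s)) ∈
          {g : ℕ → ℕ | ∃ r' s' : ℕ, s' < k ^ r' ∧ g = fun n' => x (n' * k ^ r' + s')} :=
        ⟨r, s, hs, rfl⟩
      have hxx : x ((j₀ + mf l) * n + s) = x ((j₀ + mf l') * n + s) :=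
        congrFun hPhiEq ⟨_, hgmem⟩
      have haa : a (p₀ + mf l * n + s) = a (p₀ + mf l' * n + s) := by
        rw [← hxa (mf l) s (hmfM l) hs, ← hxa (mf l') s (hmfM l') hs]
        exact hxx
      rw [hθa (mf l) s, hθa (mf l') s] at haa
      exact ite_eq_ite_iff haa
    set Pm : ℕ → Prop := fun s => θ (mf l) ≤ c s ∧ c s < θ (mf l') with hPm
    have hchain : ∀ s, s < n → (Pm (s+1) ↔ Pm s) := by
      intro s hs
      refine flip_iff hα0 hα1 (Int.fract_nonneg _) (Int.fract_lt_one _) (hQP s)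
        (hθ01 (mf l)).1 (hθ01 (mf l)).2 (hθ01 (mf l')).1 (hθ01 (mf l')).2 hθab
        (hθne l (s+1) (by omega)) (hθne l' (s+1) (by omega))
        (hθne l s (by omega)) (hθne l' s (by omega)) ?_
      rw [← hPW (θ (mf l)) s, ← hPW (θ (mf l')) s]
      exact hwords s hs
    have hIff := chain_iff Pm n hchain
    obtain ⟨s_in, hs_inr, hs_in⟩ := Finset.mem_image.mp (hvvV ((l:ℕ)+1) (by omega))
    obtain ⟨s_out, hs_outr, hs_out⟩ := Finset.mem_image.mp (hvvV (D+1) (by omega))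
    have hPin : Pm s_in := by
      constructor
      · rw [hs_in]; exact (hmf2 l).le
      · rw [hs_in]
        have h3 : vv ((l:ℕ)+1) ≤ vv (l':ℕ) := hvvle _ _ (by omega) (by omega)
        have := hmf1 l'
        linarith
    have hPout : ¬ Pm s_out := by
      rintro ⟨_, hcon⟩
      rw [hs_out] at hcon
      have h3 : vv ((l':ℕ)+1) ≤ vv (D+1) := hvvle _ _ (by have := l'.2; omega) (by omega)
      have := hmf2 l'
      linarith
    have h1 := (hIff s_in (by have := Finset.mem_range.mp hs_inr; omega)).mp hPin
    have h2 := (hIff s_out (by have := Finset.mem_range.mp hs_outr; omega)).mpr h1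
    exact hPout h2
  have hmemT : ∀ l : Fin (D+1), Φ (j₀ + mf l) ∈ hΦfin.toFinset := by
    intro l
    rw [Set.Finite.mem_toFinset]
    exact ⟨j₀ + mf l, rfl⟩
  have hinj : Function.Injective
      (fun l : Fin (D+1) => (⟨Φ (j₀ + mf l), hmemT l⟩ : ↥hΦfin.toFinset)) := by
    intro l l' hEq
    have hEq' : Φ (j₀ + mf l) = Φ (j₀ + mf l') := congrArg Subtype.val hEq
    by_contra hne
    rcases Nat.lt_or_ge (l:ℕ) (l':ℕ) with h | h
    · exact hdistinct l l' h hEq'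
    · rcases Nat.lt_or_ge (l':ℕ) (l:ℕ) with h2 | h2
      · exact hdistinct l' l h2 hEq'.symm
      · exact hne (Fin.ext (by omega))
  have hcard := Fintype.card_le_of_injective _ hinj
  rw [Fintype.card_coe, Fintype.card_fin] at hcard
  omega
end

section
/- Let α be irrational with 0 < α < 1, let 0 ≤ β < 1, and let a : ℕ → ℤ be the Sturmian sequence a(n) = ⌊(n+1)α + β⌋ − ⌊nα + β⌋. Then for every integer k ≥ 2, the sequence a is not k-automatic; equivalently, its k-kernel { (a(n·k^r + s))_{n ≥ 0} : r ≥ 0, 0 ≤ s < k^r } is infinite. -/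
/-- Stepping lemma: if `d ≠ 0` and `|d| < v - u` with `0 ≤ u < v ≤ 1`, then some
natural multiple of `d`, shifted by `c`, lands in `(u, v)` modulo 1. -/
lemma sturmian_step_lemma (d c u v : ℝ) (hd : d ≠ 0) (hu : 0 ≤ u) (huv : u < v)
    (hv : v ≤ 1) (hdlt : |d| < v - u) :
    ∃ j : ℕ, Int.fract ((j : ℝ) * d + c) ∈ Set.Ioo u v := by
  classical
  rcases lt_or_gt_of_ne hd with hneg | hpos
  · -- d < 0
    set e : ℝ := -d with he
    have he0 : 0 < e := by simp only [he]; linarith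
    have helt : e < v - u := by
      have h := abs_of_neg hneg
      rw [h] at hdlt; exact hdlt
    set t : ℤ := ⌊c - v⌋ with ht
    have htc : (t : ℝ) + v ≤ c := by
      have := Int.floor_le (c - v); simp only [ht]; linarith
    have hex : ∃ j : ℕ, c - (j : ℝ) * e < v + t := by
      obtain ⟨j, hj⟩ := exists_nat_gt ((c - v - t) / e)
      refine ⟨j, ?_⟩
      have := (div_lt_iff₀ he0).mp hj
      linarith
    set j := Nat.find hex with hjdef
    have hspec : c - (j : ℝ) * e < v + t := Nat.find_spec hex
    have hjpos : 0 < j := by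
      rcases Nat.eq_zero_or_pos j with h0 | h
      · exfalso
        have := hspec
        rw [h0] at this
        push_cast at this
        linarith
      · exact h
    have hprev : ¬ (c - ((j - 1 : ℕ) : ℝ) * e < v + t) :=
      Nat.find_min hex (Nat.sub_lt hjpos one_pos)
    have hcast : ((j - 1 : ℕ) : ℝ) = (j : ℝ) - 1 := by
      push_cast [Nat.cast_sub hjpos]; ring
    rw [hcast] at hprev
    push_neg at hprev
    -- x := c - j*e ∈ (u + t, v + t)
    have hx1 : u + t < c - (j : ℝ) * e := by nlinarith
    refine ⟨j, ?_⟩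
    have harg : (j : ℝ) * d + c = (c - (j : ℝ) * e - t) + t := by
      simp only [he]; push_cast; ring
    rw [harg, Int.fract_add_intCast]
    have : Int.fract (c - (j : ℝ) * e - t) = c - (j : ℝ) * e - t :=
      Int.fract_eq_self.2 ⟨by linarith, by linarith⟩
    rw [this]
    exact ⟨by linarith, by linarith⟩
  · -- d > 0
    have hdlt' : d < v - u := by
      have h := abs_of_pos hpos
      rw [h] at hdlt; exact hdlt
    set t : ℤ := ⌈c - u⌉ + 1 with ht
    have htc : c < u + t := by
      have := Int.le_ceil (c - u)
      simp only [ht]; push_cast; linarith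
    have hex : ∃ j : ℕ, u + (t : ℝ) < (j : ℝ) * d + c := by
      obtain ⟨j, hj⟩ := exists_nat_gt ((u + t - c) / d)
      refine ⟨j, ?_⟩
      have := (div_lt_iff₀ hpos).mp hj
      linarith
    set j := Nat.find hex with hjdef
    have hspec : u + (t : ℝ) < (j : ℝ) * d + c := Nat.find_spec hex
    have hjpos : 0 < j := by
      rcases Nat.eq_zero_or_pos j with h0 | h
      · exfalso
        have := hspec
        rw [h0] at this
        push_cast at this
        linarith
      · exact h
    have hprev : ¬ (u + (t : ℝ) < ((j - 1 : ℕ) : ℝ) * d + c) :=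
      Nat.find_min hex (Nat.sub_lt hjpos one_pos)
    have hcast : ((j - 1 : ℕ) : ℝ) = (j : ℝ) - 1 := by
      push_cast [Nat.cast_sub hjpos]; ring
    rw [hcast] at hprev
    push_neg at hprev
    have hx2 : (j : ℝ) * d + c < v + t := by nlinarith
    refine ⟨j, ?_⟩
    have harg : (j : ℝ) * d + c = ((j : ℝ) * d + c - t) + t := by ring
    rw [harg, Int.fract_add_intCast]
    have : Int.fract ((j : ℝ) * d + c - t) = (j : ℝ) * d + c - t :=
      Int.fract_eq_self.2 ⟨by linarith, by linarith⟩
    rw [this]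
    exact ⟨by linarith, by linarith⟩

/-- Pigeonhole: multiples of an irrational number come arbitrarily close to integers. -/
lemma sturmian_small_step (θ : ℝ) (hθ : Irrational θ) (ε : ℝ) (hε : 0 < ε) :
    ∃ (m : ℕ) (K : ℤ) (d : ℝ), 0 < m ∧ (m : ℝ) * θ = (K : ℝ) + d ∧ d ≠ 0 ∧ |d| < ε := by
  obtain ⟨N, hN⟩ := exists_nat_gt (1 / ε)
  have hN0 : 0 < N := by
    have : (0 : ℝ) < 1 / ε := by positivity
    exact_mod_cast this.trans hN
  have hmaps : ∀ n ∈ Finset.range (N + 1),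
      ⌊Int.fract ((n : ℝ) * θ) * N⌋ ∈ Finset.Ico (0 : ℤ) (N : ℤ) := by
    intro n _
    rw [Finset.mem_Ico]
    constructor
    · apply Int.floor_nonneg.2
      have h1 := Int.fract_nonneg ((n : ℝ) * θ)
      positivity
    · apply Int.floor_lt.2
      have h1 := Int.fract_lt_one ((n : ℝ) * θ)
      have h2 : (0 : ℝ) < N := by exact_mod_cast hN0
      push_cast
      nlinarith
  have hcard : (Finset.Ico (0 : ℤ) (N : ℤ)).card < (Finset.range (N + 1)).card := by
    rw [Finset.card_range, Int.card_Ico]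
    simp
  obtain ⟨n, hn, n', hn', hne, heq⟩ :=
    Finset.exists_ne_map_eq_of_card_lt_of_maps_to hcard hmaps
  -- WLOG n' < n
  wlog hlt : n' < n generalizing n n'
  · exact this n' hn' n hn hne.symm heq.symm (by omega)
  refine ⟨n - n', ⌊(n : ℝ) * θ⌋ - ⌊(n' : ℝ) * θ⌋,
    Int.fract ((n : ℝ) * θ) - Int.fract ((n' : ℝ) * θ), by omega, ?_, ?_, ?_⟩
  · have hc : ((n - n' : ℕ) : ℝ) = (n : ℝ) - (n' : ℝ) := by
      push_cast [Nat.cast_sub hlt.le]; ring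
    rw [hc]
    have h1 := Int.floor_add_fract ((n : ℝ) * θ)
    have h2 := Int.floor_add_fract ((n' : ℝ) * θ)
    push_cast
    linarith
  · intro h0
    have hmθ : ((n - n' : ℕ) : ℝ) * θ = ((⌊(n : ℝ) * θ⌋ - ⌊(n' : ℝ) * θ⌋ : ℤ) : ℝ) := by
      have hc : ((n - n' : ℕ) : ℝ) = (n : ℝ) - (n' : ℝ) := by
        push_cast [Nat.cast_sub hlt.le]; ring
      rw [hc]
      have h1 := Int.floor_add_fract ((n : ℝ) * θ)
      have h2 := Int.floor_add_fract ((n' : ℝ) * θ)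
      push_cast
      linarith [sub_eq_zero.mp h0]
    have hirr : Irrational (((n - n' : ℕ) : ℝ) * θ) := by
      have : ((n - n' : ℕ) : ℝ) * θ = ((n - n' : ℕ) : ℝ) * θ := rfl
      exact (hθ.natCast_mul (by omega))
    exact hirr.ne_int _ hmθ
  · have habs := Int.abs_sub_lt_one_of_floor_eq_floor heq
    have hNpos : (0 : ℝ) < N := by exact_mod_cast hN0
    have h1 : |Int.fract ((n : ℝ) * θ) - Int.fract ((n' : ℝ) * θ)| * N < 1 := by
      calc |Int.fract ((n : ℝ) * θ) - Int.fract ((n' : ℝ) * θ)| * N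
          = |Int.fract ((n : ℝ) * θ) * N - Int.fract ((n' : ℝ) * θ) * N| := by
            rw [← sub_mul, abs_mul, abs_of_pos hNpos]
        _ < 1 := habs
    have h2 : (1 : ℝ) / N < ε := by
      rw [div_lt_iff₀ hNpos]
      have := (div_lt_iff₀ hε).mp hN
      linarith
    calc |Int.fract ((n : ℝ) * θ) - Int.fract ((n' : ℝ) * θ)| < 1 / N := by
          rw [lt_div_iff₀ hNpos]; exact h1
      _ < ε := h2

/-- Density of the orbit of an irrational rotation (natural multiples suffice). -/
lemma sturmian_dense_orbit (θ : ℝ) (hθ : Irrational θ) (c u v : ℝ)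
    (hu : 0 ≤ u) (huv : u < v) (hv : v ≤ 1) :
    ∃ n : ℕ, Int.fract ((n : ℝ) * θ + c) ∈ Set.Ioo u v := by
  obtain ⟨m, K, d, hm, hmd, hd0, hdε⟩ := sturmian_small_step θ hθ (v - u) (by linarith)
  obtain ⟨j, hj⟩ := sturmian_step_lemma d c u v hd0 hu huv hv hdε
  refine ⟨j * m, ?_⟩
  have harg : ((j * m : ℕ) : ℝ) * θ + c = ((j : ℝ) * d + c) + ((j : ℤ) * K : ℤ) := by
    push_cast
    linear_combination (j : ℝ) * hmd
  rw [harg, Int.fract_add_intCast]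
  exact hj

/-- Two distinct shifts of a Sturmian sequence differ along any arithmetic
progression with common difference `M`. -/
lemma sturmian_shift_ne (α β : ℝ) (hα : Irrational α) (hα0 : 0 < α) (hα1 : α < 1)
    (a : ℕ → ℤ)
    (ha : ∀ n : ℕ, a n = ⌊((n : ℝ) + 1) * α + β⌋ - ⌊(n : ℝ) * α + β⌋)
    (M : ℕ) (hM : 0 < M) (s s' : ℕ) (hss : s < s') :
    ∃ n : ℕ, a (n * M + s) ≠ a (n * M + s') := by
  -- a m = ⌊fract(mα+β) + α⌋
  have haf : ∀ m : ℕ, a m = ⌊Int.fract ((m : ℝ) * α + β) + α⌋ := by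
    intro m
    rw [ha m]
    have h1 : ((m : ℝ) + 1) * α + β
        = ((⌊(m : ℝ) * α + β⌋ : ℤ) : ℝ) + (Int.fract ((m : ℝ) * α + β) + α) := by
      rw [← add_assoc, Int.floor_add_fract]; ring
    rw [h1, Int.floor_intCast_add]
    omega
  set D : ℕ := s' - s with hD
  have hDpos : 0 < D := by omega
  have hirrD : Irrational ((D : ℝ) * α) := hα.natCast_mul (by omega)
  set δ : ℝ := Int.fract ((D : ℝ) * α) with hδ
  have hδ0 : 0 < δ := by
    rcases lt_or_eq_of_le (Int.fract_nonneg ((D : ℝ) * α)) with h | h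
    · exact h
    · exfalso
      have hint : (D : ℝ) * α = ((⌊(D : ℝ) * α⌋ : ℤ) : ℝ) := by
        have h2 := Int.floor_add_fract ((D : ℝ) * α)
        rw [← h] at h2
        linarith
      exact hirrD.ne_int _ hint
  have hδ1 : δ < 1 := Int.fract_lt_one _
  set u : ℝ := max (1 - α) (1 - δ) with hu
  set v : ℝ := min 1 (2 - α - δ) with hv
  have hu1 : 1 - α ≤ u := le_max_left _ _
  have hu2 : 1 - δ ≤ u := le_max_right _ _
  have hv1 : v ≤ 1 := min_le_left _ _
  have hv2 : v ≤ 2 - α - δ := min_le_right _ _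
  have huv : u < v := by
    apply max_lt <;> apply lt_min <;> linarith
  have hu0 : 0 ≤ u := by linarith
  have hθ : Irrational ((M : ℝ) * α) := hα.natCast_mul (by omega)
  obtain ⟨n, hx1, hx2⟩ :=
    sturmian_dense_orbit ((M : ℝ) * α) hθ ((s : ℝ) * α + β) u v hu0 huv hv1
  set x : ℝ := Int.fract ((n : ℝ) * ((M : ℝ) * α) + ((s : ℝ) * α + β)) with hx
  refine ⟨n, ?_⟩
  -- value at n*M + s is 1
  have hfs : Int.fract (((n * M + s : ℕ) : ℝ) * α + β) = x := by
    have : ((n * M + s : ℕ) : ℝ) * α + β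
        = (n : ℝ) * ((M : ℝ) * α) + ((s : ℝ) * α + β) := by push_cast; ring
    rw [this]
  have has : a (n * M + s) = 1 := by
    rw [haf, hfs]
    rw [show (1 : ℤ) = ((1 : ℤ)) from rfl]
    apply Int.floor_eq_iff.2
    constructor
    · push_cast; linarith
    · push_cast; linarith
  -- value at n*M + s' is 0
  have hfs' : Int.fract (((n * M + s' : ℕ) : ℝ) * α + β) = x + δ - 1 := by
    have heq : Int.fract (((n * M + s' : ℕ) : ℝ) * α + β) = Int.fract (x + δ - 1) := by
      apply Int.fract_eq_fract.2
      refine ⟨⌊(n : ℝ) * ((M : ℝ) * α) + ((s : ℝ) * α + β)⌋ + ⌊(D : ℝ) * α⌋ + 1, ?_⟩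
      have h1 := Int.floor_add_fract ((n : ℝ) * ((M : ℝ) * α) + ((s : ℝ) * α + β))
      have h2 := Int.floor_add_fract ((D : ℝ) * α)
      have hsD : (s' : ℝ) = (s : ℝ) + (D : ℝ) := by
        have : s' = s + D := by omega
        rw [this]; push_cast; ring
      push_cast
      rw [hsD]
      simp only [← hx, ← hδ] at h1 h2 ⊢
      nlinarith [h1, h2]
    rw [heq]
    exact Int.fract_eq_self.2 ⟨by linarith, by linarith⟩
  have has' : a (n * M + s') = 0 := by
    rw [haf, hfs']
    apply Int.floor_eq_iff.2
    constructor
    · push_cast; linarith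
    · push_cast; linarith
  rw [has, has']
  omega

/-- A Sturmian sequence `a n = ⌊(n+1)α + β⌋ - ⌊nα + β⌋` (with `α` irrational,
`0 < α < 1`, `0 ≤ β < 1`) is not `k`-automatic for any `k ≥ 2`: its `k`-kernel
is infinite. -/
theorem sturmian_not_automatic
    (α β : ℝ) (hα : Irrational α) (hα0 : 0 < α) (hα1 : α < 1)
    (hβ0 : 0 ≤ β) (hβ1 : β < 1)
    (a : ℕ → ℤ)
    (ha : ∀ n : ℕ, a n = ⌊((n : ℝ) + 1) * α + β⌋ - ⌊(n : ℝ) * α + β⌋) :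
    ∀ k : ℕ, 2 ≤ k →
      {g : ℕ → ℤ | ∃ r s : ℕ, s < k ^ r ∧
        g = fun n => a (n * k ^ r + s)}.Infinite := by
  intro k hk hfin
  have hcard : ∀ r : ℕ, k ^ r ≤ hfin.toFinset.card := by
    intro r
    have hkr : 0 < k ^ r := pow_pos (by omega) r
    have h := Finset.card_le_card_of_injOn
      (fun s : ℕ => (fun n : ℕ => a (n * k ^ r + s)))
      (s := Finset.range (k ^ r)) (t := hfin.toFinset)
      (fun s hs => by
        rw [Finset.mem_coe, Set.Finite.mem_toFinset]
        exact ⟨r, s, Finset.mem_range.mp (Finset.mem_coe.mp hs), rfl⟩)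
      (by
        intro s hs s' hs' heq
        by_contra hne
        rcases Nat.lt_or_ge s s' with hlt | hge
        · obtain ⟨n, hn⟩ := sturmian_shift_ne α β hα hα0 hα1 a ha (k ^ r) hkr s s' hlt
          exact hn (congrFun heq n)
        · have hlt : s' < s := by omega
          obtain ⟨n, hn⟩ := sturmian_shift_ne α β hα hα0 hα1 a ha (k ^ r) hkr s' s hlt
          exact hn (congrFun heq n).symm)
    simpa using h
  have h1 := hcard hfin.toFinset.card
  have h2 : hfin.toFinset.card < 2 ^ hfin.toFinset.card := Nat.lt_two_pow_self
  have h3 : 2 ^ hfin.toFinset.card ≤ k ^ hfin.toFinset.card :=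
    Nat.pow_le_pow_left hk _
  omega
end

section
/- Let α be irrational with 0 < α < 1, let k ≥ 2 and r ≥ 0 be integers, and let d₁, d₂ be positive integers with fractional parts {d₁α} ≠ {d₂α}. Then there exists a positive integer M such that every set of M consecutive nonnegative integers contains an integer N for which exactly one of the two inequalities {(N·k^r + d₁)α} < α and {(N·k^r + d₂)α} < α holds. -/
lemma exists_small_fract {γ : ℝ} (hγ : Irrational γ) {ε : ℝ} (hε : 0 < ε) :
    ∃ m : ℕ, 0 < m ∧ 0 < Int.fract ((m : ℝ) * γ) ∧ Int.fract ((m : ℝ) * γ) < ε := by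
  set n : ℕ := ⌈1/ε⌉₊ + 1 with hn
  have hnpos : 0 < n := Nat.succ_pos _
  obtain ⟨j, q, hq0, hqn, hqj⟩ := Real.exists_int_int_abs_mul_sub_le γ hnpos
  have hn1 : (1:ℝ) ≤ (n:ℝ) := by exact_mod_cast hnpos
  have hlt : 1/((n:ℝ)+1) < ε := by
    rw [div_lt_iff₀ (by positivity)]
    have h1 : 1/ε ≤ (⌈1/ε⌉₊:ℝ) := Nat.le_ceil _
    have h2 : (1:ℝ)/ε < (n:ℝ) := by
      have : ((⌈1/ε⌉₊ : ℕ):ℝ) < (n:ℝ) := by exact_mod_cast Nat.lt_succ_self _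
      linarith
    have h3 : 1 < (n:ℝ) * ε := (div_lt_iff₀ hε).mp h2
    nlinarith
  have hhalf : 1/((n:ℝ)+1) ≤ 1/2 := by
    rw [div_le_div_iff₀ (by positivity) (by norm_num)]; linarith
  set x : ℝ := (q:ℝ) * γ - (j:ℝ) with hxdef
  have hx_irr : Irrational x := by
    have h1 : Irrational ((q:ℝ) * γ) := hγ.intCast_mul hq0.ne'
    simpa [hxdef] using h1.sub_intCast j
  have hx0 : x ≠ 0 := by simpa using hx_irr.ne_int 0
  have habs : |x| ≤ 1/((n:ℝ)+1) := hqj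
  have hmq : ((q.toNat : ℕ):ℝ) = (q:ℝ) := by exact_mod_cast Int.toNat_of_nonneg hq0.le
  have hmqpos : 0 < q.toNat := by omega
  rcases hx0.lt_or_gt with hneg | hpos
  · -- x < 0 case
    set η : ℝ := -x with hηdef
    have hη0 : 0 < η := by simp [hηdef]; linarith
    have hηsm : η ≤ 1/((n:ℝ)+1) := by
      have := neg_abs_le x
      have : η ≤ |x| := by rw [hηdef, abs_of_neg hneg]
      linarith [habs]
    have hηε : η < ε := lt_of_le_of_lt hηsm hlt
    have hη1 : η < 1 := by linarith [hhalf]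
    have h1η : 1 < 1/η := (one_lt_div hη0).mpr hη1
    have hceil2 : 2 ≤ ⌈1/η⌉₊ := by
      have : 1 < ⌈1/η⌉₊ := Nat.lt_ceil.mpr (by exact_mod_cast h1η)
      omega
    set s : ℕ := ⌈1/η⌉₊ - 1 with hsdef
    have hs1 : 1 ≤ s := by omega
    have hs_eq : (s:ℝ) = (⌈1/η⌉₊:ℝ) - 1 := by
      rw [hsdef, Nat.cast_sub (by omega)]; norm_num
    have hsη_lt : (s:ℝ) * η < 1 := by
      have h2 : (⌈1/η⌉₊:ℝ) < 1/η + 1 := Nat.ceil_lt_add_one (by positivity)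
      have h3 : (s:ℝ) < 1/η := by rw [hs_eq]; linarith
      calc (s:ℝ) * η < (1/η) * η := by exact mul_lt_mul_of_pos_right h3 hη0
        _ = 1 := by field_simp
    have hsη_ge : 1 - η ≤ (s:ℝ) * η := by
      have h2 : 1/η ≤ (⌈1/η⌉₊:ℝ) := Nat.le_ceil _
      have h3 : 1 ≤ (⌈1/η⌉₊:ℝ) * η := by
        calc (1:ℝ) = (1/η) * η := by field_simp
          _ ≤ (⌈1/η⌉₊:ℝ) * η := mul_le_mul_of_nonneg_right h2 hη0.le
      nlinarith [hs_eq]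
    have hqγ : (q:ℝ) * γ = (j:ℝ) + x := by rw [hxdef]; ring
    have hsηpos : 0 < (s:ℝ) * η := by
      have : (0:ℝ) < (s:ℝ) := by exact_mod_cast hs1
      positivity
    have key : Int.fract (((s * q.toNat : ℕ):ℝ) * γ) = 1 - (s:ℝ) * η := by
      have e1 : ((s * q.toNat : ℕ):ℝ) * γ = (1 - (s:ℝ)*η) + (((s:ℤ) * j - 1 : ℤ):ℝ) := by
        push_cast [hmq]
        have hx' : x = -η := by rw [hηdef]; ring
        rw [mul_assoc, hqγ, hx']; ring
      rw [e1, Int.fract_add_intCast]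
      exact Int.fract_eq_self.mpr ⟨by linarith, by linarith⟩
    exact ⟨s * q.toNat, Nat.mul_pos (by omega) hmqpos,
      by rw [key]; linarith, by rw [key]; linarith⟩
  · -- 0 < x case
    have key : Int.fract ((q.toNat : ℝ) * γ) = x := by
      have e1 : ((q.toNat : ℕ):ℝ) * γ = x + ((j:ℤ):ℝ) := by rw [hmq, hxdef]; ring
      rw [e1, Int.fract_add_intCast]
      exact Int.fract_eq_self.mpr ⟨hpos.le, by
        have := le_abs_self x; linarith [hlt, habs, hhalf]⟩
    exact ⟨q.toNat, hmqpos, by rw [key]; exact hpos,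
      by rw [key]; have := le_abs_self x; linarith⟩


lemma rotation_hits {β a b : ℝ} (hβ : 0 < β) (ha : 0 ≤ a) (hab : a < b) (hb : b ≤ 1)
    (hβ2 : 2*β < b - a) {t : ℝ} (ht0 : 0 ≤ t) (ht1 : t < 1) :
    ∃ j : ℕ, j ≤ ⌈2/β⌉₊ ∧ a < Int.fract (t + j*β) ∧ Int.fract (t + j*β) < b := by
  set c : ℝ := (a+b)/2 with hc
  have hac : a < c := by rw [hc]; linarith
  have hcb : c + β < b := by rw [hc]; linarith
  have hct : 0 < c + 1 - t := by linarith
  set j : ℕ := ⌈(c + 1 - t)/β⌉₊ with hj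
  have h1 : (c + 1 - t)/β ≤ (j:ℝ) := Nat.le_ceil _
  have h3 : c + 1 - t ≤ (j:ℝ)*β := by rw [div_le_iff₀ hβ] at h1; linarith
  have h2 : (j:ℝ) < (c + 1 - t)/β + 1 := Nat.ceil_lt_add_one (by positivity)
  have h2' : (j:ℝ) - 1 < (c+1-t)/β := by linarith
  have h4 : ((j:ℝ)-1)*β < c + 1 - t := (lt_div_iff₀ hβ).mp h2'
  have h4' : (j:ℝ)*β < c + 1 - t + β := by nlinarith
  have hval : Int.fract (t + j*β) = t + j*β - 1 := by
    rw [← Int.fract_sub_one]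
    exact Int.fract_eq_self.mpr ⟨by linarith, by linarith⟩
  refine ⟨j, ?_, by rw [hval]; linarith, by rw [hval]; linarith⟩
  apply Nat.ceil_le_ceil
  gcongr
  linarith

lemma fract_add_fract' (x y : ℝ) :
    Int.fract (x + y) = Int.fract (Int.fract x + Int.fract y) := by
  conv_lhs => rw [← Int.fract_add_floor x, ← Int.fract_add_floor y]
  rw [show Int.fract x + ↑⌊x⌋ + (Int.fract y + ↑⌊y⌋)
      = (Int.fract x + Int.fract y) + ((⌊x⌋ + ⌊y⌋ : ℤ):ℝ) by push_cast; ring,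
    Int.fract_add_intCast]

/-- Let `α` be irrational with `0 < α < 1`, let `k ≥ 2`, `r ≥ 0`, and let
`d₁, d₂` be positive integers with `{d₁α} ≠ {d₂α}`.  Then the set of `N` for
which exactly one of `{(N·k^r + d₁)α} < α` and `{(N·k^r + d₂)α} < α` holds is
syndetic: some window length `M` works for every block of `M` consecutive
nonnegative integers. -/
theorem sturmian_disagreement_syndetic
    (α : ℝ) (hα : Irrational α) (hα0 : 0 < α) (hα1 : α < 1)
    (k r : ℕ) (hk : 2 ≤ k)
    (d₁ d₂ : ℕ) (hd₁ : 0 < d₁) (hd₂ : 0 < d₂)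
    (hfract : Int.fract ((d₁ : ℝ) * α) ≠ Int.fract ((d₂ : ℝ) * α)) :
    ∃ M : ℕ, 0 < M ∧ ∀ n₀ : ℕ, ∃ N : ℕ, n₀ ≤ N ∧ N < n₀ + M ∧
      Xor' (Int.fract ((((N * k ^ r + d₁ : ℕ) : ℝ)) * α) < α)
           (Int.fract ((((N * k ^ r + d₂ : ℕ) : ℝ)) * α) < α) := by
  obtain ⟨γ, hγdef⟩ : ∃ g : ℝ, g = (k:ℝ)^r * α := ⟨_, rfl⟩
  obtain ⟨c₁, hc₁def⟩ : ∃ c : ℝ, c = (d₁:ℝ) * α := ⟨_, rfl⟩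
  obtain ⟨c₂, hc₂def⟩ : ∃ c : ℝ, c = (d₂:ℝ) * α := ⟨_, rfl⟩
  rw [← hc₁def, ← hc₂def] at hfract
  have hγ : Irrational γ := by
    have h1 : Irrational (((k^r : ℕ):ℝ) * α) := hα.natCast_mul (pow_ne_zero r (by omega))
    rw [hγdef]
    simpa [Nat.cast_pow] using h1
  obtain ⟨δ, hδdef⟩ : ∃ x : ℝ, x = Int.fract (c₂ - c₁) := ⟨_, rfl⟩
  have hδ0 : 0 < δ := by
    rw [hδdef]
    rcases (Int.fract_nonneg (c₂ - c₁)).lt_or_eq with h | h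
    · exact h
    · exfalso
      obtain ⟨-, -, z, hz⟩ := Int.fract_eq_iff.mp h.symm
      exact hfract (Int.fract_eq_fract.mpr ⟨-z, by push_cast; linarith⟩)
  have hδ1 : δ < 1 := hδdef ▸ Int.fract_lt_one _
  obtain ⟨a, b, ha0, hab, hb1, hkey⟩ :
      ∃ a b : ℝ, 0 ≤ a ∧ a < b ∧ b ≤ 1 ∧
        ∀ u : ℝ, a < u → u < b → u < α ∧ α ≤ Int.fract (u + δ) := by
    rcases lt_or_ge δ α with hcase | hcase
    · refine ⟨α - δ, min α (1 - δ), by linarith, lt_min (by linarith) (by linarith),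
        (min_le_left _ _).trans hα1.le, ?_⟩
      intro u hu1 hu2
      have hu2a : u < α := lt_of_lt_of_le hu2 (min_le_left _ _)
      have hu2b : u < 1 - δ := lt_of_lt_of_le hu2 (min_le_right _ _)
      refine ⟨hu2a, ?_⟩
      have hf : Int.fract (u + δ) = u + δ := Int.fract_eq_self.mpr ⟨by linarith, by linarith⟩
      rw [hf]; linarith
    · refine ⟨0, min α (1 - δ), le_refl _, lt_min hα0 (by linarith),
        (min_le_left _ _).trans hα1.le, ?_⟩
      intro u hu1 hu2
      have hu2a : u < α := lt_of_lt_of_le hu2 (min_le_left _ _)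
      have hu2b : u < 1 - δ := lt_of_lt_of_le hu2 (min_le_right _ _)
      refine ⟨hu2a, ?_⟩
      have hf : Int.fract (u + δ) = u + δ := Int.fract_eq_self.mpr ⟨by linarith, by linarith⟩
      rw [hf]; linarith
  obtain ⟨m, hm0, hβ0, hβε⟩ := exists_small_fract hγ (show (0:ℝ) < (b - a)/4 by linarith)
  obtain ⟨β, hβdef⟩ : ∃ x : ℝ, x = Int.fract ((m:ℝ) * γ) := ⟨_, rfl⟩
  rw [← hβdef] at hβ0 hβε
  refine ⟨m * ⌈2/β⌉₊ + 1, Nat.succ_pos _, fun n₀ => ?_⟩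
  obtain ⟨t, htdef⟩ : ∃ x : ℝ, x = Int.fract ((n₀:ℝ) * γ + c₁) := ⟨_, rfl⟩
  obtain ⟨j, hjle, hfr1, hfr2⟩ := rotation_hits hβ0 ha0 hab hb1 (by linarith)
    (htdef ▸ Int.fract_nonneg ((n₀:ℝ) * γ + c₁)) (htdef ▸ Int.fract_lt_one _)
  refine ⟨n₀ + j*m, Nat.le_add_right _ _, ?_, ?_⟩
  · have h1 : j*m ≤ ⌈2/β⌉₊ * m := Nat.mul_le_mul_right _ hjle
    have h2 : ⌈2/β⌉₊ * m = m * ⌈2/β⌉₊ := Nat.mul_comm _ _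
    omega
  · have hNγ : Int.fract (((n₀ + j*m : ℕ):ℝ) * γ + c₁) = Int.fract (t + j*β) := by
      have e1 : ((n₀ + j*m : ℕ):ℝ) * γ + c₁
          = (t + (j:ℝ)*β) + ((⌊(n₀:ℝ)*γ + c₁⌋ + (j:ℤ)*⌊(m:ℝ)*γ⌋ : ℤ):ℝ) := by
        have h1 : t + (⌊(n₀:ℝ)*γ + c₁⌋ : ℝ) = (n₀:ℝ)*γ + c₁ := by
          rw [htdef]; exact Int.fract_add_floor _
        have h2 : β + (⌊(m:ℝ)*γ⌋ : ℝ) = (m:ℝ)*γ := by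
          rw [hβdef]; exact Int.fract_add_floor _
        push_cast
        linear_combination -h1 - (j:ℝ) * h2
      rw [e1, Int.fract_add_intCast]
    have hu1 : a < Int.fract (((n₀ + j*m : ℕ):ℝ) * γ + c₁) := by rw [hNγ]; exact hfr1
    have hu2 : Int.fract (((n₀ + j*m : ℕ):ℝ) * γ + c₁) < b := by rw [hNγ]; exact hfr2
    obtain ⟨hcond1, hcond2⟩ := hkey _ hu1 hu2
    have hNγ2 : Int.fract (((n₀ + j*m : ℕ):ℝ) * γ + c₂)
        = Int.fract (Int.fract (((n₀ + j*m : ℕ):ℝ) * γ + c₁) + δ) := by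
      rw [show ((n₀ + j*m : ℕ):ℝ) * γ + c₂ = (((n₀ + j*m : ℕ):ℝ) * γ + c₁) + (c₂ - c₁) by ring,
        fract_add_fract' , ← hδdef]
    have hcast1 : ((((n₀ + j*m) * k^r + d₁ : ℕ)):ℝ) * α = ((n₀ + j*m : ℕ):ℝ) * γ + c₁ := by
      rw [hγdef, hc₁def]; push_cast; ring
    have hcast2 : ((((n₀ + j*m) * k^r + d₂ : ℕ)):ℝ) * α = ((n₀ + j*m : ℕ):ℝ) * γ + c₂ := by
      rw [hγdef, hc₂def]; push_cast; ring
    refine Or.inl ⟨?_, ?_⟩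
    · rw [hcast1]; exact hcond1
    · intro hlt
      rw [hcast2, hNγ2] at hlt
      exact absurd hlt (not_lt.mpr hcond2)
end

section
/- Let θ be an irrational real number, let c be a real number, and let I ⊆ [0,1) be an interval of positive length. Then the set S = { n ∈ ℕ : {nθ + c} ∈ I } is syndetic: there exists a positive integer M such that every set of M consecutive nonnegative integers contains an element of S. -/
open Set

-- step 1: small positive fractional part of a multiple
lemma exists_pos_fract_lt (θ : ℝ) (hθ : Irrational θ) {ε : ℝ} (hε : 0 < ε) (hε1 : ε ≤ 1) :
    ∃ k : ℕ, 0 < k ∧ 0 < Int.fract ((k : ℝ) * θ) ∧ Int.fract ((k : ℝ) * θ) < ε := by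
  -- the subgroup generated by θ and 1 is dense
  have hdense : Dense ((AddSubgroup.closure {θ, 1} : AddSubgroup ℝ) : Set ℝ) := by
    rcases AddSubgroup.dense_or_cyclic (AddSubgroup.closure {θ, 1}) with h | ⟨a, ha⟩
    · exact h
    · exfalso
      have hθmem : θ ∈ AddSubgroup.closure ({θ, 1} : Set ℝ) :=
        AddSubgroup.subset_closure (by simp)
      have h1mem : (1 : ℝ) ∈ AddSubgroup.closure ({θ, 1} : Set ℝ) :=
        AddSubgroup.subset_closure (by simp)
      rw [ha, AddSubgroup.mem_closure_singleton] at hθmem h1mem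
      obtain ⟨m, hm⟩ := hθmem
      obtain ⟨n, hn⟩ := h1mem
      have hn0 : (n : ℝ) ≠ 0 := by
        intro h0
        rw [zsmul_eq_mul, h0, zero_mul] at hn; norm_num at hn
      have : θ = (m : ℝ) / (n : ℝ) := by
        rw [zsmul_eq_mul] at hm hn
        field_simp
        rw [← hm, mul_assoc, mul_comm a (n:ℝ), hn, mul_one]
      exact (irrational_iff_ne_rational θ).1 hθ m n (by exact_mod_cast hn0) this
  obtain ⟨g, hgmem, hg0, hgε⟩ : ∃ g, g ∈ (AddSubgroup.closure ({θ, 1} : Set ℝ) : Set ℝ) ∧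
      0 < g ∧ g < ε := by
    obtain ⟨g, hg1, hg2⟩ := hdense.exists_mem_open isOpen_Ioo
      (Set.nonempty_Ioo.2 hε)
    exact ⟨g, hg1, hg2.1, hg2.2⟩
  rw [SetLike.mem_coe, AddSubgroup.mem_closure_pair] at hgmem
  obtain ⟨a, b, hab⟩ := hgmem
  simp only [zsmul_eq_mul, mul_one] at hab
  have ha0 : a ≠ 0 := by
    rintro rfl
    simp only [Int.cast_zero, zero_mul, zero_add] at hab
    subst hab
    have : (0:ℤ) < b := by exact_mod_cast hg0
    have : (1:ℝ) ≤ b := by exact_mod_cast this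
    linarith
  rcases lt_or_gt_of_ne ha0 with haneg | hapos
  · -- a < 0 : fract (k₁ θ) = 1 - g with k₁ = (-a).toNat
    set k₁ : ℕ := (-a).toNat with hk₁
    have hk₁pos : 0 < k₁ := by omega
    have hk₁θ : (k₁ : ℝ) * θ = (b : ℝ) - g := by
      have : ((k₁ : ℤ) : ℝ) = -(a : ℝ) := by
        push_cast [hk₁, Int.toNat_of_nonneg (by omega : (0:ℤ) ≤ -a)]
        ring
      rw [show ((k₁:ℕ):ℝ) = ((k₁ : ℤ) : ℝ) by push_cast; ring, this, ← hab]; ring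
    -- take m = ⌈1/g⌉ - 1 steps
    have hg1 : g < 1 := lt_of_lt_of_le hgε hε1
    set N : ℕ := ⌈1/g⌉₊ with hN
    have hN2 : 2 ≤ N := by
      have h1 : (1:ℝ) < 1/g := by rw [lt_div_iff₀ hg0]; linarith
      have : (1:ℕ) < N := Nat.lt_ceil.2 (by exact_mod_cast h1)
      omega
    set m : ℕ := N - 1 with hm
    have hmg1 : (m : ℝ) * g < 1 := by
      have hceil : (N : ℝ) < 1/g + 1 := Nat.ceil_lt_add_one (by positivity)
      have : (m : ℝ) = (N : ℝ) - 1 := by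
        have : (1:ℕ) ≤ N := by omega
        push_cast [hm, this]; ring
      rw [this]
      calc ((N:ℝ) - 1) * g < (1/g) * g := by nlinarith
        _ = 1 := by field_simp
    have hmg2 : 1 - (m:ℝ) * g ≤ g := by
      have : (1:ℝ)/g ≤ N := Nat.le_ceil _
      have hmN : (m : ℝ) = (N : ℝ) - 1 := by
        have : (1:ℕ) ≤ N := by omega
        push_cast [hm, this]; ring
      rw [hmN]
      have : 1 ≤ (N:ℝ) * g := by
        calc (1:ℝ) = (1/g) * g := by field_simp
          _ ≤ (N:ℝ) * g := by nlinarith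
      nlinarith
    have hmpos : 0 < m := by omega
    refine ⟨m * k₁, Nat.mul_pos hmpos hk₁pos, ?_, ?_⟩
    all_goals {
      have hval : ((m*k₁:ℕ):ℝ)*θ = (1 - (m:ℝ)*g) + ((m*b - 1 : ℤ):ℝ) := by
        push_cast
        linear_combination (m:ℝ) * hk₁θ
      rw [hval, Int.fract_add_intCast, Int.fract_eq_self.2
        ⟨by linarith, by nlinarith⟩]
      first
      | linarith
      | nlinarith }
  · -- a > 0
    set k : ℕ := a.toNat with hk
    have hkpos : 0 < k := by omega
    have hkθ : (k : ℝ) * θ = g - (b : ℝ) := by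
      have : ((k : ℤ) : ℝ) = (a : ℝ) := by
        push_cast [hk, Int.toNat_of_nonneg (by omega : (0:ℤ) ≤ a)]
        ring
      rw [show ((k:ℕ):ℝ) = ((k : ℤ) : ℝ) by push_cast; ring, this, ← hab]; ring
    refine ⟨k, hkpos, ?_, ?_⟩ <;>
    · rw [show (k:ℝ)*θ = g + ((-b : ℤ):ℝ) by push_cast; linarith [hkθ],
        Int.fract_add_intCast, Int.fract_eq_self.2 ⟨le_of_lt hg0, by linarith⟩]
      linarith


-- ascending walk with small step hits the interval
lemma hit_up (x u v δ : ℝ) (hx0 : 0 ≤ x) (hx1 : x < 1) (hu0 : 0 ≤ u) (hv1 : v < 1)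
    (huv : u < v) (hδ0 : 0 < δ) (hδ : δ ≤ v - u) :
    ∃ m : ℕ, m ≤ ⌈1/δ⌉₊ ∧ Int.fract (x + m*δ) ∈ Set.Icc u v := by
  classical
  set j : ℝ := if x ≤ u then 0 else 1 with hj
  have hxT : x ≤ u + j := by
    rw [hj]; split
    · simpa
    · linarith
  have hTx : u + j ≤ x + 1 := by
    rw [hj]; split
    · simp; linarith
    · simp; linarith [not_le.1 (by assumption : ¬ x ≤ u)]
  have hW : u + j ≤ x + (⌈1/δ⌉₊ : ℕ) * δ := by
    have h1 : (1:ℝ) ≤ (⌈1/δ⌉₊ : ℝ) * δ := by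
      calc (1:ℝ) = (1/δ) * δ := by field_simp
        _ ≤ (⌈1/δ⌉₊ : ℝ) * δ := by
            have := Nat.le_ceil (1/δ); nlinarith
    linarith
  have hP : ∃ m : ℕ, u + j ≤ x + m*δ := ⟨_, hW⟩
  set m := Nat.find hP with hm
  have hspec : u + j ≤ x + m*δ := Nat.find_spec hP
  have hup : x + m*δ < v + j := by
    rcases Nat.eq_zero_or_pos m with h0 | hpos
    · rw [h0] at hspec ⊢
      push_cast at hspec ⊢
      simp only [zero_mul, add_zero] at hspec ⊢
      have hj0 : j = 0 := by
        by_contra hne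
        have hj1 : j = 1 := by
          rw [hj] at hne ⊢
          split at hne
          · simp at hne
          · rw [if_neg (by assumption)]
        rw [hj1] at hspec; linarith
      rw [hj0] at hspec ⊢
      -- x ≤ u from def of j
      have : x ≤ u := by
        by_contra hc
        rw [hj, if_neg hc] at hj0; norm_num at hj0
      linarith
    · have hmin := Nat.find_min hP (show m - 1 < m by omega)
      push_neg at hmin
      have hcast : ((m:ℕ):ℝ) * δ = ((m-1 : ℕ):ℝ) * δ + δ := by
        have : ((m-1:ℕ):ℝ) = (m:ℝ) - 1 := by
          push_cast [Nat.cast_sub (by omega : 1 ≤ m)]; ring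
        rw [this]; ring
      nlinarith [hmin]
  refine ⟨m, Nat.find_min' hP hW, ?_⟩
  have hj01 : j = 0 ∨ j = 1 := by rw [hj]; split <;> simp
  rcases hj01 with h | h
  · rw [h] at hspec hup
    rw [Int.fract_eq_self.2 ⟨by linarith, by linarith⟩]
    exact ⟨by linarith, by linarith⟩
  · rw [h] at hspec hup
    have : Int.fract (x + m*δ) = x + m*δ - 1 := by
      rw [show x + m*δ = (x + m*δ - 1) + ((1:ℤ):ℝ) by push_cast; ring,
        Int.fract_add_intCast, Int.fract_eq_self.2 ⟨by linarith, by linarith⟩]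
      push_cast; ring
    rw [this]
    exact ⟨by linarith, by linarith⟩

-- descending walk with small step hits the interval
lemma hit_down (x u v δ : ℝ) (hx0 : 0 ≤ x) (hx1 : x < 1) (hu0 : 0 ≤ u) (hv1 : v < 1)
    (huv : u < v) (hδ0 : 0 < δ) (hδ : δ ≤ v - u) :
    ∃ m : ℕ, m ≤ ⌈1/δ⌉₊ ∧ Int.fract (x - m*δ) ∈ Set.Icc u v := by
  classical
  set j : ℝ := if v ≤ x then 0 else 1 with hj
  have hxT : v - j ≤ x := by
    rw [hj]; split
    · simpa
    · linarith
  have hTx : x ≤ v - j + 1 := by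
    rw [hj]; split
    · simp; linarith
    · simp; linarith [not_le.1 (by assumption : ¬ v ≤ x)]
  have hW : x - (⌈1/δ⌉₊ : ℕ) * δ ≤ v - j := by
    have h1 : (1:ℝ) ≤ (⌈1/δ⌉₊ : ℝ) * δ := by
      calc (1:ℝ) = (1/δ) * δ := by field_simp
        _ ≤ (⌈1/δ⌉₊ : ℝ) * δ := by
            have := Nat.le_ceil (1/δ); nlinarith
    linarith
  have hP : ∃ m : ℕ, x - m*δ ≤ v - j := ⟨_, hW⟩
  set m := Nat.find hP with hm
  have hspec : x - m*δ ≤ v - j := Nat.find_spec hP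
  have hlow : u - j < x - m*δ := by
    rcases Nat.eq_zero_or_pos m with h0 | hpos
    · rw [h0] at hspec ⊢
      push_cast at hspec ⊢
      simp only [zero_mul, sub_zero] at hspec ⊢
      have hj0 : j = 0 := by
        by_contra hne
        have hj1 : j = 1 := by
          rw [hj] at hne ⊢
          split at hne
          · simp at hne
          · rw [if_neg (by assumption)]
        rw [hj1] at hspec; linarith
      rw [hj0] at hspec ⊢
      have : v ≤ x := by
        by_contra hc
        rw [hj, if_neg hc] at hj0; norm_num at hj0
      linarith
    · have hmin := Nat.find_min hP (show m - 1 < m by omega)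
      push_neg at hmin
      have hcast : ((m:ℕ):ℝ) * δ = ((m-1 : ℕ):ℝ) * δ + δ := by
        have : ((m-1:ℕ):ℝ) = (m:ℝ) - 1 := by
          push_cast [Nat.cast_sub (by omega : 1 ≤ m)]; ring
        rw [this]; ring
      nlinarith [hmin]
  refine ⟨m, Nat.find_min' hP hW, ?_⟩
  have hj01 : j = 0 ∨ j = 1 := by rw [hj]; split <;> simp
  rcases hj01 with h | h
  · rw [h] at hspec hlow
    rw [Int.fract_eq_self.2 ⟨by linarith, by linarith⟩]
    exact ⟨by linarith, by linarith⟩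
  · rw [h] at hspec hlow
    have : Int.fract (x - m*δ) = x - m*δ + 1 := by
      rw [show x - m*δ = (x - m*δ + 1) + ((-1:ℤ):ℝ) by push_cast; ring,
        Int.fract_add_intCast, Int.fract_eq_self.2 ⟨by linarith, by linarith⟩]
      push_cast; ring
    rw [this]
    exact ⟨by linarith, by linarith⟩


/-- For `θ` irrational, `c` real, and `I ⊆ [0,1)` an interval of positive
length (an order-connected set containing two distinct points), the set
`{ n : ℕ | {nθ + c} ∈ I }` is syndetic. -/
theorem fract_mem_interval_syndetic
    (θ : ℝ) (hθ : Irrational θ) (c : ℝ)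
    (I : Set ℝ) (hI : I ⊆ Set.Ico (0 : ℝ) 1)
    (hconn : I.OrdConnected)
    (hlen : ∃ u ∈ I, ∃ v ∈ I, u < v) :
    ∃ M : ℕ, 0 < M ∧ ∀ n₀ : ℕ, ∃ n : ℕ, n₀ ≤ n ∧ n < n₀ + M ∧
      Int.fract ((n : ℝ) * θ + c) ∈ I := by
  obtain ⟨u, hu, v, hv, huv⟩ := hlen
  have hIcc : Set.Icc u v ⊆ I := hconn.out hu hv
  have hu0 : 0 ≤ u := (hI hu).1
  have hv1 : v < 1 := (hI hv).2
  have hε : 0 < v - u := by linarith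
  have hε1 : v - u ≤ 1 := by linarith
  obtain ⟨k, hkpos, hδ0, hδε⟩ := exists_pos_fract_lt θ hθ hε hε1
  set δ : ℝ := Int.fract ((k:ℝ) * θ) with hδdef
  refine ⟨k * ⌈1/δ⌉₊ + 1, by positivity, fun n₀ => ?_⟩
  set x₀ : ℝ := Int.fract ((n₀:ℝ) * θ + c) with hx₀def
  obtain ⟨m, hmle, hmem⟩ := hit_up x₀ u v δ (Int.fract_nonneg _) (Int.fract_lt_one _)
    hu0 hv1 huv hδ0 (le_of_lt hδε)
  refine ⟨n₀ + m * k, by omega, by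
    have : m * k ≤ ⌈1/δ⌉₊ * k := Nat.mul_le_mul_right _ hmle
    have : k * ⌈1/δ⌉₊ = ⌈1/δ⌉₊ * k := Nat.mul_comm _ _
    omega, ?_⟩
  have hval : ((n₀ + m * k : ℕ):ℝ) * θ + c
      = (x₀ + m*δ) + ((⌊(n₀:ℝ)*θ + c⌋ + m*⌊(k:ℝ)*θ⌋ : ℤ):ℝ) := by
    have h1 : x₀ = (n₀:ℝ)*θ + c - ⌊(n₀:ℝ)*θ + c⌋ := by rw [hx₀def, Int.fract]
    have h2 : δ = (k:ℝ)*θ - ⌊(k:ℝ)*θ⌋ := by rw [hδdef, Int.fract]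
    push_cast
    rw [h1, h2]
    ring
  rw [hval, Int.fract_add_intCast]
  exact hIcc hmem
end

section
/- Let t : ℕ → ℕ be the Thue–Morse sequence, where t(n) is the parity (0 or 1) of the number of 1's in the binary representation of n, and let f : ℕ → ℤ be the Fibonacci word, defined by f(n) = ⌊(n+2)·(1/φ)⌋ − ⌊(n+1)·(1/φ)⌋ where φ = (1+√5)/2. Then every common factor of t and f has length at most 8: if there exist indices i, j with t(i+s) = f(j+s) for all 0 ≤ s < L, then L ≤ 8. -/
/-- Every common factor of the Thue–Morse sequence `t` (with `t n` the parity
of the number of `1`'s in the binary representation of `n`) and the Fibonacci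
word `f n = ⌊(n+2)/φ⌋ - ⌊(n+1)/φ⌋` (with `φ = (1+√5)/2`) has length at
most `8`. -/
theorem thueMorse_fibonacci_common_factor_le_eight
    (t : ℕ → ℕ) (ht : ∀ n : ℕ, t n = (Nat.digits 2 n).count 1 % 2)
    (φ : ℝ) (hφ : φ = (1 + Real.sqrt 5) / 2)
    (f : ℕ → ℤ)
    (hf : ∀ n : ℕ, f n = ⌊((n : ℝ) + 2) * φ⁻¹⌋ - ⌊((n : ℝ) + 1) * φ⁻¹⌋) :
    ∀ (L i j : ℕ), (∀ s < L, (t (i + s) : ℤ) = f (j + s)) → L ≤ 8 := by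
  -- basic facts about t
  have ht1 : ∀ n, t n ≤ 1 := fun n => by rw [ht n]; omega
  have heven : ∀ n, t (2 * n) = (Nat.digits 2 n).count 1 % 2 := by
    intro n
    rcases Nat.eq_zero_or_pos n with rfl | hn
    · simp [ht]
    · rw [ht, Nat.digits_def' (by norm_num : (1:ℕ) < 2) (by omega)]
      have h1 : (2 * n) % 2 = 0 := by omega
      have h2 : (2 * n) / 2 = n := by omega
      rw [h1, h2]
      simp [List.count_cons]
  have hodd : ∀ n, t (2 * n + 1) = ((Nat.digits 2 n).count 1 + 1) % 2 := by
    intro n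
    rw [ht, Nat.digits_def' (by norm_num : (1:ℕ) < 2) (by omega)]
    have h1 : (2 * n + 1) % 2 = 1 := by omega
    have h2 : (2 * n + 1) / 2 = n := by omega
    rw [h1, h2]
    simp [List.count_cons]
  have hpair : ∀ n, t (2 * n) + t (2 * n + 1) = 1 := by
    intro n
    have h1 := heven n
    have h2 := hodd n
    omega
  have hdub : ∀ n, t (2 * n) = t n := by
    intro n
    rw [heven n, ht n]
  -- facts about φ
  have s5 : Real.sqrt 5 ^ 2 = 5 := Real.sq_sqrt (by norm_num)
  have s5n : (0:ℝ) ≤ Real.sqrt 5 := Real.sqrt_nonneg 5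
  have hφpos : (0:ℝ) < φ := by rw [hφ]; nlinarith
  have hφne : φ ≠ 0 := ne_of_gt hφpos
  have hb1 : 3 * φ ≤ 5 := by rw [hφ]; nlinarith
  have hb2 : 5 ≤ 4 * φ := by rw [hφ]; nlinarith
  have hαpos : (0:ℝ) < φ⁻¹ := inv_pos.mpr hφpos
  have hα1 : (3:ℝ) ≤ 5 * φ⁻¹ := by
    have e : φ⁻¹ * (5 - 3 * φ) = 5 * φ⁻¹ - 3 := by field_simp
    nlinarith [mul_nonneg (le_of_lt hαpos) (by linarith : (0:ℝ) ≤ 5 - 3 * φ)]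
  have hα2 : 5 * φ⁻¹ ≤ 4 := by
    have e : φ⁻¹ * (4 * φ - 5) = 4 - 5 * φ⁻¹ := by field_simp
    nlinarith [mul_nonneg (le_of_lt hαpos) (by linarith : (0:ℝ) ≤ 4 * φ - 5)]
  -- any 5 consecutive values of f sum to 3 or 4
  have hsum5 : ∀ a : ℕ, 3 ≤ f a + f (a+1) + f (a+2) + f (a+3) + f (a+4) ∧
      f a + f (a+1) + f (a+2) + f (a+3) + f (a+4) ≤ 4 := by
    intro a
    have key : f a + f (a+1) + f (a+2) + f (a+3) + f (a+4)
        = ⌊((a:ℝ) + 6) * φ⁻¹⌋ - ⌊((a:ℝ) + 1) * φ⁻¹⌋ := by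
      rw [hf a, hf (a+1), hf (a+2), hf (a+3), hf (a+4)]
      push_cast
      ring_nf
    set x := ((a:ℝ) + 1) * φ⁻¹ with hx
    have harg : ((a:ℝ) + 6) * φ⁻¹ = x + 5 * φ⁻¹ := by rw [hx]; ring
    rw [key, harg]
    have hfl : (x:ℝ) < ⌊x⌋ + 1 := Int.lt_floor_add_one x
    have hfl2 : (⌊x⌋ : ℝ) ≤ x := Int.floor_le x
    constructor
    · have : (⌊x⌋ + 3 : ℤ) ≤ ⌊x + 5 * φ⁻¹⌋ := by
        apply Int.le_floor.mpr
        push_cast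
        linarith
      omega
    · have : ⌊x + 5 * φ⁻¹⌋ < ⌊x⌋ + 5 := by
        apply Int.floor_lt.mpr
        push_cast
        linarith
      omega
  -- main argument
  intro L i j h
  by_contra hL
  push_neg at hL
  have h9 : ∀ s, s < 9 → (t (i + s) : ℤ) = f (j + s) := fun s hs => h s (by omega)
  have E0 := h9 0 (by norm_num); have E1 := h9 1 (by norm_num)
  have E2 := h9 2 (by norm_num); have E3 := h9 3 (by norm_num)
  have E4 := h9 4 (by norm_num); have E5 := h9 5 (by norm_num)
  have E6 := h9 6 (by norm_num); have E7 := h9 7 (by norm_num)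
  have E8 := h9 8 (by norm_num)
  rw [show i + 0 = i from by omega, show j + 0 = j from by omega] at E0
  have S0 := hsum5 j
  have S1 := hsum5 (j+1)
  have S2 := hsum5 (j+2)
  have S3 := hsum5 (j+3)
  have S4 := hsum5 (j+4)
  rw [show j+1+1 = j+2 from by omega, show j+1+2 = j+3 from by omega,
      show j+1+3 = j+4 from by omega, show j+1+4 = j+5 from by omega] at S1
  rw [show j+2+1 = j+3 from by omega, show j+2+2 = j+4 from by omega,
      show j+2+3 = j+5 from by omega, show j+2+4 = j+6 from by omega] at S2
  rw [show j+3+1 = j+4 from by omega, show j+3+2 = j+5 from by omega,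
      show j+3+3 = j+6 from by omega, show j+3+4 = j+7 from by omega] at S3
  rw [show j+4+1 = j+5 from by omega, show j+4+2 = j+6 from by omega,
      show j+4+3 = j+7 from by omega, show j+4+4 = j+8 from by omega] at S4
  have T0 := ht1 i; have T1 := ht1 (i+1); have T2 := ht1 (i+2)
  have T3 := ht1 (i+3); have T4 := ht1 (i+4); have T5 := ht1 (i+5)
  have T6 := ht1 (i+6); have T7 := ht1 (i+7); have T8 := ht1 (i+8)
  rcases Nat.even_or_odd i with ⟨m, hm⟩ | ⟨m, hm⟩
  · -- i = 2 * m
    have hm' : i = 2 * m := by omega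
    have P0 := hpair m
    have P1 := hpair (m+1)
    have P2 := hpair (m+2)
    have P3 := hpair (m+3)
    rw [show 2*m = i from hm'.symm] at P0
    rw [show 2*(m+1) = i+2 from by omega] at P1
    rw [show i+2+1 = i+3 from by omega] at P1
    rw [show 2*(m+2) = i+4 from by omega] at P2
    rw [show i+4+1 = i+5 from by omega] at P2
    rw [show 2*(m+3) = i+6 from by omega] at P3
    rw [show i+6+1 = i+7 from by omega] at P3
    have D0 := hdub m; rw [show 2*m = i from hm'.symm] at D0
    have D1 := hdub (m+1); rw [show 2*(m+1) = i+2 from by omega] at D1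
    have D2 := hdub (m+2); rw [show 2*(m+2) = i+4 from by omega] at D2
    have D3 := hdub (m+3); rw [show 2*(m+3) = i+6 from by omega] at D3
    have D4 := hdub (m+4); rw [show 2*(m+4) = i+8 from by omega] at D4
    rcases Nat.even_or_odd m with ⟨p, hp⟩ | ⟨p, hp⟩
    · have Q := hpair p
      rw [show 2*p = m from by omega] at Q
      rw [show m+1 = m+1 from rfl] at Q
      omega
    · have Q := hpair (p+2)
      rw [show 2*(p+2) = m+3 from by omega] at Q
      rw [show m+3+1 = m+4 from by omega] at Q
      omega
  · -- i = 2 * m + 1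
    have P0 := hpair m
    rw [show 2*m+1 = i from hm.symm] at P0
    have P1 := hpair (m+1)
    rw [show 2*(m+1) = i+1 from by omega] at P1
    rw [show i+1+1 = i+2 from by omega] at P1
    have P2 := hpair (m+2)
    rw [show 2*(m+2) = i+3 from by omega] at P2
    rw [show i+3+1 = i+4 from by omega] at P2
    have P3 := hpair (m+3)
    rw [show 2*(m+3) = i+5 from by omega] at P3
    rw [show i+5+1 = i+6 from by omega] at P3
    have P4 := hpair (m+4)
    rw [show 2*(m+4) = i+7 from by omega] at P4
    rw [show i+7+1 = i+8 from by omega] at P4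
    have D0 := hdub m
    have D1 := hdub (m+1); rw [show 2*(m+1) = i+1 from by omega] at D1
    have D2 := hdub (m+2); rw [show 2*(m+2) = i+3 from by omega] at D2
    rcases Nat.even_or_odd m with ⟨p, hp⟩ | ⟨p, hp⟩
    · have Q := hpair p
      rw [show 2*p = m from by omega] at Q
      omega
    · have Q := hpair (p+1)
      rw [show 2*(p+1) = m+1 from by omega] at Q
      rw [show m+1+1 = m+2 from by omega] at Q
      omega
end
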